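/- arXiv:1812.01557 — 10 statements merged into one kernel-verified Lean document; each statement's English description precedes it below -/
import Mathlib

section
/- Let d be a positive integer and let 0 ≤ β < α < 1. Let H be a probability distribution over the (finite) set of Boolean functions h : {-1,1}^d → {-1,1}, and for θ ∈ [0,1] let p_θ = Pr_{h∼H, (x,y) θ-correlated}[h(x) = h(y)]. Assume p_β < 1. Then log(1/p_α)/log(1/p_β) ≥ log(2/(1+α))/log(2/(1+β)). -/
open Finset

noncomputable section

/-- Embedding of `Bool` into `{-1, 1} ⊆ ℝ`: `true ↦ 1`, `false ↦ -1`. -/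
def signVal (b : Bool) : ℝ := if b then 1 else -1

/-- The joint probability mass function of a randomly `θ`-correlated pair `(x, y)`:
`x` is uniform on the hypercube and each `y i` independently equals `x i` with
probability `(1 + θ)/2` and `-x i` (i.e. `!(x i)`) with probability `(1 - θ)/2`. -/
def corrPMF (d : ℕ) (θ : ℝ) (x y : Fin d → Bool) : ℝ :=
  (1 / 2 ^ d) * ∏ i, (if x i = y i then (1 + θ) / 2 else (1 - θ) / 2)

/-- The collision probability `Pr[h(x) = h(y)]` for a randomly `θ`-correlated pair. -/
def collProb (d : ℕ) (θ : ℝ) (h : (Fin d → Bool) → Bool) : ℝ :=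
  ∑ x, ∑ y, corrPMF d θ x y * (if h x = h y then 1 else 0)

/-- The collision probability `p_θ = Pr_{h ∼ H, (x,y) θ-corr}[h(x) = h(y)]` where `H` is a
probability mass function on Boolean functions. -/
def collProbH (d : ℕ) (θ : ℝ) (H : ((Fin d → Bool) → Bool) → ℝ) : ℝ :=
  ∑ h, H h * collProb d θ h

/-- The expectation `E[f(x) g(y)]` for a randomly `θ`-correlated pair `(x, y)`. -/
def corrExp (d : ℕ) (θ : ℝ) (f g : (Fin d → Bool) → ℝ) : ℝ :=
  ∑ x, ∑ y, corrPMF d θ x y * (f x * g y)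

/-- The Fourier coefficient `f̂(S) = E_x[f(x) ∏_{i ∈ S} x i]`. -/
def cubeFourierCoeff (d : ℕ) (f : (Fin d → Bool) → ℝ) (S : Finset (Fin d)) : ℝ :=
  (1 / 2 ^ d) * ∑ x, f x * ∏ i ∈ S, signVal (x i)

/-- The Fourier weight of `f` at degree `k`: `W^k[f] = ∑_{|S| = k} f̂(S)^2`. -/
def cubeFourierWeight (d : ℕ) (f : (Fin d → Bool) → ℝ) (k : ℕ) : ℝ :=
  ∑ S ∈ Finset.univ.filter (fun S : Finset (Fin d) => S.card = k), (cubeFourierCoeff d f S) ^ 2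



lemma GmonoReal (m : ℕ) {t₁ t₂ : ℝ} (h0 : 0 ≤ t₁) (h12 : t₁ ≤ t₂) (h21 : t₂ ≤ 1) :
    ((m:ℝ)+1) * t₁^m * (1+t₁) / (1+t₁^(m+1)) ≤ ((m:ℝ)+1) * t₂^m * (1+t₂) / (1+t₂^(m+1)) := by
  have h0' : (0:ℝ) ≤ t₂ := le_trans h0 h12
  have d1 : (0:ℝ) < 1 + t₁^(m+1) := by positivity
  have d2 : (0:ℝ) < 1 + t₂^(m+1) := by positivity
  rw [div_le_div_iff₀ d1 d2]
  have hA : t₁^m ≤ t₂^m := pow_le_pow_left₀ h0 h12 m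
  have hA0 : (0:ℝ) ≤ t₁^m := pow_nonneg h0 m
  have hB1 : t₂^m ≤ 1 := pow_le_one₀ h0' h21
  have hm : (0:ℝ) ≤ (m:ℝ)+1 := by positivity
  rw [pow_succ, pow_succ]
  nlinarith [mul_nonneg hm (mul_nonneg (sub_nonneg.2 hA) (by linarith : (0:ℝ) ≤ 1 + t₂)),
    mul_nonneg hm (mul_nonneg (mul_nonneg hA0 (sub_nonneg.2 hB1)) (sub_nonneg.2 h12))]

/-- θ(x) = 2 e^{-x} - 1 lies in [0,1] for x ∈ [0, log 2]. -/
lemma theta_bounds {x : ℝ} (h0 : 0 ≤ x) (h2 : x ≤ Real.log 2) :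
    0 ≤ 2 * Real.exp (-x) - 1 ∧ 2 * Real.exp (-x) - 1 ≤ 1 := by
  constructor
  · have : Real.exp (-Real.log 2) ≤ Real.exp (-x) := Real.exp_le_exp.2 (by linarith)
    rw [Real.exp_neg, Real.exp_log (by norm_num : (0:ℝ) < 2)] at this
    linarith
  · have : Real.exp (-x) ≤ Real.exp 0 := Real.exp_le_exp.2 (by linarith)
    rw [Real.exp_zero] at this
    linarith

lemma hasDerivF (m : ℕ) {x : ℝ} (hx : (0:ℝ) < 1 + (2*Real.exp (-x) - 1)^(m+1)) :
    HasDerivAt (fun x : ℝ => Real.log 2 - Real.log (1 + (2*Real.exp (-x) - 1)^(m+1)))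
      (((m:ℝ)+1) * (2*Real.exp (-x) - 1)^m * (2*Real.exp (-x)) / (1 + (2*Real.exp (-x) - 1)^(m+1))) x := by
  have h1 : HasDerivAt (fun x : ℝ => -x) (-1) x := (hasDerivAt_id x).neg
  have h2 : HasDerivAt (fun x : ℝ => Real.exp (-x)) (Real.exp (-x) * (-1)) x := h1.exp
  have h3 : HasDerivAt (fun x : ℝ => 2*Real.exp (-x) - 1) (-(2*Real.exp (-x))) x := by
    have := (h2.const_mul 2).sub_const 1
    exact this.congr_deriv (by ring)
  have h4 : HasDerivAt (fun x : ℝ => 1 + (2*Real.exp (-x) - 1)^(m+1))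
      (((m:ℝ)+1) * (2*Real.exp (-x) - 1)^m * (-(2*Real.exp (-x)))) x := by
    have := (h3.pow (m+1)).const_add 1
    exact this.congr_deriv (by push_cast; simp [Nat.add_sub_cancel])
  have h5 := h4.log (ne_of_gt hx)
  have h6 := h5.const_sub (Real.log 2)
  exact h6.congr_deriv (by rw [mul_neg, neg_div, neg_neg])

lemma concaveF (m : ℕ) :
    ConcaveOn ℝ (Set.Icc 0 (Real.log 2))
      (fun x : ℝ => Real.log 2 - Real.log (1 + (2*Real.exp (-x) - 1)^(m+1))) := by
  have hpos : ∀ x ∈ Set.Icc (0:ℝ) (Real.log 2), (0:ℝ) < 1 + (2*Real.exp (-x) - 1)^(m+1) := by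
    intro x hx
    obtain ⟨h0, _⟩ := theta_bounds hx.1 hx.2
    positivity
  apply AntitoneOn.concaveOn_of_deriv (convex_Icc _ _)
  · intro x hx
    exact (hasDerivF m (hpos x hx)).continuousAt.continuousWithinAt
  · rw [interior_Icc]
    intro x hx
    exact (hasDerivF m (hpos x (Set.mem_Icc_of_Ioo hx))).differentiableAt.differentiableWithinAt
  · rw [interior_Icc]
    intro x₁ hx₁ x₂ hx₂ h12
    have hm₁ := Set.mem_Icc_of_Ioo hx₁
    have hm₂ := Set.mem_Icc_of_Ioo hx₂
    rw [(hasDerivF m (hpos _ hm₁)).deriv, (hasDerivF m (hpos _ hm₂)).deriv]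
    obtain ⟨ht₁0, ht₁1⟩ := theta_bounds hm₁.1 hm₁.2
    obtain ⟨ht₂0, ht₂1⟩ := theta_bounds hm₂.1 hm₂.2
    have hexp : Real.exp (-x₂) ≤ Real.exp (-x₁) := Real.exp_le_exp.2 (by linarith)
    have key := GmonoReal m ht₂0
      (by linarith : 2*Real.exp (-x₂) - 1 ≤ 2*Real.exp (-x₁) - 1) ht₁1
    have e₁ : 1 + (2*Real.exp (-x₁) - 1) = 2*Real.exp (-x₁) := by ring
    have e₂ : 1 + (2*Real.exp (-x₂) - 1) = 2*Real.exp (-x₂) := by ring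
    rw [e₁, e₂] at key
    exact key

/-- Key pointwise inequality: `(1+α^k)/2 ≤ ((1+β^k)/2)^c` with
`c = log(2/(1+α)) / log(2/(1+β))`. -/
lemma point (k : ℕ) {α β : ℝ} (hβ0 : 0 ≤ β) (hβα : β ≤ α) (hα1 : α < 1) :
    (1 + α^k)/2 ≤ ((1 + β^k)/2) ^ (Real.log (2/(1+α)) / Real.log (2/(1+β))) := by
  rcases Nat.eq_zero_or_pos k with hk | hk
  · subst hk
    norm_num
  obtain ⟨m, rfl⟩ : ∃ m, k = m + 1 := ⟨k - 1, (Nat.succ_pred_eq_of_pos hk).symm⟩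
  have hα0 : 0 ≤ α := le_trans hβ0 hβα
  have hβ1 : β < 1 := lt_of_le_of_lt hβα hα1
  have h1α : (0:ℝ) < 1 + α := by linarith
  have h1β : (0:ℝ) < 1 + β := by linarith
  set x := Real.log (2/(1+α)) with hxdef
  set y := Real.log (2/(1+β)) with hydef
  have hx0 : 0 < x := Real.log_pos (by rw [lt_div_iff₀ h1α]; linarith)
  have hy0 : 0 < y := Real.log_pos (by rw [lt_div_iff₀ h1β]; linarith)
  have hxy : x ≤ y := Real.log_le_log (by positivity)
    (div_le_div_of_nonneg_left (by norm_num) h1β (by linarith))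
  have hy2 : y ≤ Real.log 2 := Real.log_le_log (by positivity) (by
    rw [div_le_iff₀ h1β]; nlinarith)
  -- the exponential substitution
  have hex : Real.exp (-x) = (1+α)/2 := by
    rw [hxdef, ← Real.log_inv, Real.exp_log (by positivity), inv_div]
  have hey : Real.exp (-y) = (1+β)/2 := by
    rw [hydef, ← Real.log_inv, Real.exp_log (by positivity), inv_div]
  have hθx : 2*Real.exp (-x) - 1 = α := by rw [hex]; ring
  have hθy : 2*Real.exp (-y) - 1 = β := by rw [hey]; ring
  -- apply concavity at points 0 and y with weights (1 - x/y, x/y)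
  have hconc := concaveF m
  have h0mem : (0:ℝ) ∈ Set.Icc (0:ℝ) (Real.log 2) :=
    Set.mem_Icc.2 ⟨le_refl _, Real.log_nonneg (by norm_num)⟩
  have hymem : y ∈ Set.Icc (0:ℝ) (Real.log 2) := Set.mem_Icc.2 ⟨le_of_lt hy0, hy2⟩
  have hcc := hconc.2 h0mem hymem
    (show (0:ℝ) ≤ 1 - x/y from by
      rw [sub_nonneg]; exact div_le_one_of_le₀ hxy (le_of_lt hy0))
    (show (0:ℝ) ≤ x/y from by positivity)
    (show (1 - x/y) + x/y = 1 from by ring)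
  have hxeq : (1 - x/y) • (0:ℝ) + (x/y) • y = x := by
    rw [smul_eq_mul, smul_eq_mul, mul_zero, zero_add, div_mul_cancel₀ x (ne_of_gt hy0)]
  rw [hxeq] at hcc
  simp only [smul_eq_mul] at hcc
  have hF0 : Real.log 2 - Real.log (1 + (2*Real.exp (-(0:ℝ)) - 1)^(m+1)) = 0 := by
    norm_num
  rw [hθx, hθy, hF0] at hcc
  have hcc' : (x/y) * (Real.log 2 - Real.log (1 + β^(m+1))) ≤
      Real.log 2 - Real.log (1 + α^(m+1)) := by linarith
  -- now convert to the rpow inequality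
  have hαk : (0:ℝ) < (1 + α^(m+1))/2 := by positivity
  have hβk : (0:ℝ) < (1 + β^(m+1))/2 := by positivity
  rw [← Real.log_le_log_iff hαk (Real.rpow_pos_of_pos hβk _)]
  rw [Real.log_rpow hβk]
  have hlogα : Real.log ((1 + α^(m+1))/2) = Real.log (1 + α^(m+1)) - Real.log 2 :=
    Real.log_div (by positivity) (by norm_num)
  have hlogβ : Real.log ((1 + β^(m+1))/2) = Real.log (1 + β^(m+1)) - Real.log 2 :=
    Real.log_div (by positivity) (by norm_num)
  rw [hlogα, hlogβ]
  have hdiv : x / y * (Real.log (1 + β^(m+1)) - Real.log 2) =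
      -((x/y) * (Real.log 2 - Real.log (1 + β^(m+1)))) := by ring
  rw [hdiv]
  linarith

-- helpers
lemma sum_pi_bool (d : ℕ) (g : Fin d → Bool → ℝ) :
    ∑ x : Fin d → Bool, ∏ i, g i (x i) = ∏ i, (g i true + g i false) := by
  rw [show (∏ i, (g i true + g i false)) = ∏ i, ∑ b, g i b by
      refine Finset.prod_congr rfl fun i _ => ?_
      rw [Fintype.sum_bool]]
  rw [Finset.prod_univ_sum]
  rw [Fintype.piFinset_univ]

lemma card_cube (d : ℕ) : (Finset.univ : Finset (Fin d → Bool)).card = 2 ^ d := by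
  simp [Finset.card_univ]

lemma corrPMF_mass (d : ℕ) (θ : ℝ) :
    ∑ x : Fin d → Bool, ∑ y : Fin d → Bool, corrPMF d θ x y = 1 := by
  have hx : ∀ x : Fin d → Bool, ∑ y, corrPMF d θ x y = 1/2^d := by
    intro x
    unfold corrPMF
    rw [← Finset.mul_sum,
      sum_pi_bool d (fun i b => if x i = b then (1+θ)/2 else (1-θ)/2)]
    have h1 : ∀ i : Fin d,
        ((if x i = true then (1+θ)/2 else (1-θ)/2) +
          (if x i = false then (1+θ)/2 else (1-θ)/2)) = (1:ℝ) := by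
      intro i; cases hxi : x i <;> simp <;> ring
    rw [Finset.prod_congr rfl fun i _ => h1 i, Finset.prod_const_one, mul_one]
  rw [Finset.sum_congr rfl fun x _ => hx x, Finset.sum_const, card_cube]
  simp

lemma corrPMF_expand (d : ℕ) (θ : ℝ) (x y : Fin d → Bool) :
    corrPMF d θ x y = (1/4^d) * ∑ S : Finset (Fin d),
      θ^S.card * ((∏ i ∈ S, signVal (x i)) * ∏ i ∈ S, signVal (y i)) := by
  unfold corrPMF
  have h1 : ∀ i : Fin d, (if x i = y i then (1+θ)/2 else (1-θ)/2)
      = (θ * (signVal (x i) * signVal (y i)) + 1)/2 := by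
    intro i; cases hx : x i <;> cases hy : y i <;> simp [signVal] <;> ring
  rw [Finset.prod_congr rfl fun i _ => h1 i, Finset.prod_div_distrib,
    Finset.prod_const, Finset.prod_add]
  rw [Finset.card_univ, Fintype.card_fin]
  rw [Finset.powerset_univ]
  have h2 : ∀ S : Finset (Fin d),
      (∏ i ∈ S, θ * (signVal (x i) * signVal (y i))) * ∏ i ∈ univ \ S, (1:ℝ)
        = θ^S.card * ((∏ i ∈ S, signVal (x i)) * ∏ i ∈ S, signVal (y i)) := by
    intro S
    rw [Finset.prod_const_one, mul_one, Finset.prod_mul_distrib,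
      Finset.prod_mul_distrib, Finset.prod_const]
  rw [Finset.sum_congr rfl fun S _ => h2 S]
  have h4 : ((2:ℝ)^d) * (2^d) = 4^d := by
    rw [← mul_pow]; norm_num
  field_simp
  ring_nf
  congr 1
  rw [show (4:ℝ) = 2^2 by norm_num, ← pow_mul, mul_comm]

lemma corrExp_expand (d : ℕ) (θ : ℝ) (f : (Fin d → Bool) → ℝ) :
    corrExp d θ f f = ∑ S : Finset (Fin d), θ^S.card * (cubeFourierCoeff d f S)^2 := by
  calc corrExp d θ f f
      = ∑ x, ∑ y, ∑ S : Finset (Fin d), (1/4^d) * θ^S.card *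
          ((f x * ∏ i ∈ S, signVal (x i)) * (f y * ∏ i ∈ S, signVal (y i))) := by
        unfold corrExp
        refine Finset.sum_congr rfl fun x _ => Finset.sum_congr rfl fun y _ => ?_
        rw [corrPMF_expand, Finset.mul_sum, Finset.sum_mul]
        exact Finset.sum_congr rfl fun S _ => by ring
    _ = ∑ S : Finset (Fin d), ∑ x, ∑ y, (1/4^d) * θ^S.card *
          ((f x * ∏ i ∈ S, signVal (x i)) * (f y * ∏ i ∈ S, signVal (y i))) := by
        rw [Finset.sum_congr rfl fun (x : Fin d → Bool) (_ : x ∈ univ) => Finset.sum_comm]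
        exact Finset.sum_comm
    _ = ∑ S : Finset (Fin d), (1/4^d) * θ^S.card *
          ((∑ x, f x * ∏ i ∈ S, signVal (x i)) * (∑ x, f x * ∏ i ∈ S, signVal (x i))) := by
        refine Finset.sum_congr rfl fun S _ => ?_
        rw [Finset.sum_mul_sum, Finset.mul_sum]
        exact Finset.sum_congr rfl fun x _ => by rw [Finset.mul_sum]
    _ = ∑ S : Finset (Fin d), θ^S.card * (cubeFourierCoeff d f S)^2 := by
        refine Finset.sum_congr rfl fun S _ => ?_
        unfold cubeFourierCoeff
        have h4 : ((1:ℝ)/2^d)^2 = 1/4^d := by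
          rw [div_pow, one_pow, ← pow_mul, mul_comm d 2, pow_mul]
          norm_num
        rw [mul_pow, h4]
        ring

lemma signVal_sq (b : Bool) : signVal b * signVal b = 1 := by
  cases b <;> simp [signVal]

lemma corrExp_one (d : ℕ) (h : (Fin d → Bool) → Bool) :
    corrExp d 1 (fun x => signVal (h x)) (fun x => signVal (h x)) = 1 := by
  unfold corrExp
  have key : ∀ x y : Fin d → Bool,
      corrPMF d 1 x y * (signVal (h x) * signVal (h y))
        = if x = y then (1:ℝ)/2^d else 0 := by
    intro x y
    by_cases hxy : x = y
    · subst hxy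
      simp only [if_pos rfl]
      unfold corrPMF
      norm_num
      exact signVal_sq (h x)
    · rw [if_neg hxy]
      have : ∃ i, x i ≠ y i := by
        by_contra hc
        push_neg at hc
        exact hxy (funext hc)
      obtain ⟨i, hi⟩ := this
      unfold corrPMF
      rw [Finset.prod_eq_zero (Finset.mem_univ i) (by rw [if_neg hi]; norm_num)]
      ring
  rw [Finset.sum_congr rfl fun x _ => Finset.sum_congr rfl fun y _ => key x y]
  rw [Finset.sum_congr rfl fun (x : Fin d → Bool) _ => Finset.sum_ite_eq (univ : Finset (Fin d → Bool)) x (fun _ => (1:ℝ)/2^d)]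
  simp [card_cube]

lemma parseval (d : ℕ) (h : (Fin d → Bool) → Bool) :
    ∑ S : Finset (Fin d), (cubeFourierCoeff d (fun x => signVal (h x)) S)^2 = 1 := by
  have := corrExp_expand d 1 (fun x => signVal (h x))
  rw [corrExp_one] at this
  simpa using this.symm

lemma collProb_repr (d : ℕ) (θ : ℝ) (h : (Fin d → Bool) → Bool) :
    collProb d θ h = ∑ S : Finset (Fin d),
      (cubeFourierCoeff d (fun x => signVal (h x)) S)^2 * ((1 + θ^S.card)/2) := by
  have ind : ∀ x y : Fin d → Bool, (if h x = h y then (1:ℝ) else 0)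
      = (1 + signVal (h x) * signVal (h y))/2 := by
    intro x y
    cases hx : h x <;> cases hy : h y <;> simp [signVal] <;> norm_num
  have step : collProb d θ h = (∑ x, ∑ y, corrPMF d θ x y)/2
      + (corrExp d θ (fun x => signVal (h x)) (fun x => signVal (h x)))/2 := by
    unfold collProb corrExp
    simp only [ind]
    rw [Finset.sum_div, Finset.sum_div, ← Finset.sum_add_distrib]
    refine Finset.sum_congr rfl fun x _ => ?_
    rw [Finset.sum_div, Finset.sum_div, ← Finset.sum_add_distrib]
    refine Finset.sum_congr rfl fun y _ => ?_
    ring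
  rw [step, corrPMF_mass, corrExp_expand]
  nth_rewrite 1 [← parseval d h]
  rw [Finset.sum_div, Finset.sum_div, ← Finset.sum_add_distrib]
  exact Finset.sum_congr rfl fun S _ => by ring

lemma collProbH_repr (d : ℕ) (θ : ℝ) (H : ((Fin d → Bool) → Bool) → ℝ) :
    collProbH d θ H = ∑ S : Finset (Fin d),
      (∑ h, H h * (cubeFourierCoeff d (fun x => signVal (h x)) S)^2) * ((1 + θ^S.card)/2) := by
  unfold collProbH
  rw [Finset.sum_congr rfl fun h _ => by rw [collProb_repr d θ h, Finset.mul_sum]]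
  rw [Finset.sum_comm]
  refine Finset.sum_congr rfl fun S _ => ?_
  rw [Finset.sum_mul]
  exact Finset.sum_congr rfl fun h _ => by ring


/-- for any probability distribution `H` over Boolean functions on the
`d`-dimensional hypercube, with `0 ≤ β < α < 1` and `p_β < 1`, we have
`log(1/p_α)/log(1/p_β) ≥ log(2/(1+α))/log(2/(1+β))`. -/
theorem boolean_lsh_lower_bound (d : ℕ) (hd : 0 < d) (α β : ℝ)
    (hβ : 0 ≤ β) (hβα : β < α) (hα : α < 1)
    (H : ((Fin d → Bool) → Bool) → ℝ) (Hnonneg : ∀ h, 0 ≤ H h) (Hsum : ∑ h, H h = 1)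
    (hpβ : collProbH d β H < 1) :
    Real.log (1 / collProbH d α H) / Real.log (1 / collProbH d β H) ≥
      Real.log (2 / (1 + α)) / Real.log (2 / (1 + β)) := by
  classical
  set c : ℝ := Real.log (2 / (1 + α)) / Real.log (2 / (1 + β)) with hc
  have hα0 : 0 ≤ α := le_trans hβ (le_of_lt hβα)
  have hβ1 : β < 1 := lt_trans hβα hα
  have h1α : (0:ℝ) < 1 + α := by linarith
  have h1β : (0:ℝ) < 1 + β := by linarith
  have hlogα : 0 < Real.log (2/(1+α)) := Real.log_pos (by rw [lt_div_iff₀ h1α]; linarith)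
  have hlogβ : 0 < Real.log (2/(1+β)) := Real.log_pos (by rw [lt_div_iff₀ h1β]; linarith)
  have hlogle : Real.log (2/(1+α)) ≤ Real.log (2/(1+β)) :=
    Real.log_le_log (by positivity)
      (div_le_div_of_nonneg_left (by norm_num) h1β (by linarith))
  have hc0 : 0 < c := div_pos hlogα hlogβ
  have hc1 : c ≤ 1 := by
    rw [hc, div_le_one hlogβ]; exact hlogle
  -- weights
  set w : Finset (Fin d) → ℝ :=
    fun S => ∑ h, H h * (cubeFourierCoeff d (fun x => signVal (h x)) S)^2 with hw
  have hwnonneg : ∀ S, 0 ≤ w S := fun S =>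
    Finset.sum_nonneg fun h _ => mul_nonneg (Hnonneg h) (sq_nonneg _)
  have hwsum : ∑ S : Finset (Fin d), w S = 1 := by
    rw [hw]
    rw [Finset.sum_comm]
    rw [Finset.sum_congr rfl fun h _ => by rw [← Finset.mul_sum, parseval d h, mul_one]]
    exact Hsum
  have hA : collProbH d α H = ∑ S : Finset (Fin d), w S * ((1 + α^S.card)/2) :=
    collProbH_repr d α H
  have hB : collProbH d β H = ∑ S : Finset (Fin d), w S * ((1 + β^S.card)/2) :=
    collProbH_repr d β H
  -- positivity of the collision probabilities
  have hBpos : 0 < collProbH d β H := by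
    rw [hB]
    have : (1:ℝ)/2 = ∑ S : Finset (Fin d), w S * (1/2) := by
      rw [← Finset.sum_mul, hwsum, one_mul]
    have hge : (1:ℝ)/2 ≤ ∑ S : Finset (Fin d), w S * ((1 + β^S.card)/2) := by
      rw [this]
      refine Finset.sum_le_sum fun S _ => ?_
      refine mul_le_mul_of_nonneg_left ?_ (hwnonneg S)
      have : 0 ≤ β^S.card := pow_nonneg hβ _
      linarith
    linarith
  have hApos : 0 < collProbH d α H := by
    rw [hA]
    have : (1:ℝ)/2 = ∑ S : Finset (Fin d), w S * (1/2) := by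
      rw [← Finset.sum_mul, hwsum, one_mul]
    have hge : (1:ℝ)/2 ≤ ∑ S : Finset (Fin d), w S * ((1 + α^S.card)/2) := by
      rw [this]
      refine Finset.sum_le_sum fun S _ => ?_
      refine mul_le_mul_of_nonneg_left ?_ (hwnonneg S)
      have : 0 ≤ α^S.card := pow_nonneg hα0 _
      linarith
    linarith
  -- the key comparison: p_α ≤ p_β ^ c
  have hkey : collProbH d α H ≤ (collProbH d β H) ^ c := by
    have hstep1 : collProbH d α H ≤
        ∑ S : Finset (Fin d), w S * (((1 + β^S.card)/2) ^ c) := by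
      rw [hA]
      refine Finset.sum_le_sum fun S _ => ?_
      exact mul_le_mul_of_nonneg_left (point S.card hβ (le_of_lt hβα) hα) (hwnonneg S)
    have hstep2 : ∑ S : Finset (Fin d), w S * (((1 + β^S.card)/2) ^ c) ≤
        (∑ S : Finset (Fin d), w S * ((1 + β^S.card)/2)) ^ c := by
      have hp : (1:ℝ) ≤ 1/c := (le_div_iff₀ hc0).2 (by linarith)
      have := Real.arith_mean_le_rpow_mean Finset.univ w
        (fun S : Finset (Fin d) => ((1 + β^S.card)/2) ^ c)
        (fun S _ => hwnonneg S) hwsum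
        (fun S _ => Real.rpow_nonneg (by positivity) c) hp
      rw [one_div_one_div] at this
      have hrw : (∑ S : Finset (Fin d), w S * (((1 + β^S.card)/2) ^ c) ^ ((1:ℝ)/c))
          = ∑ S : Finset (Fin d), w S * ((1 + β^S.card)/2) := by
        refine Finset.sum_congr rfl fun S _ => ?_
        rw [← Real.rpow_mul (by positivity : (0:ℝ) ≤ (1 + β^S.card)/2),
          mul_one_div_cancel (ne_of_gt hc0), Real.rpow_one]
      rwa [hrw] at this
    rw [hB]
    exact le_trans hstep1 hstep2
  -- conclude
  have hlogB : Real.log (collProbH d β H) < 0 := Real.log_neg hBpos hpβ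
  have hlogAB : Real.log (collProbH d α H) ≤ c * Real.log (collProbH d β H) := by
    have := Real.log_le_log hApos hkey
    rwa [Real.log_rpow hBpos] at this
  rw [ge_iff_le, Real.log_div one_ne_zero (ne_of_gt hApos),
    Real.log_div one_ne_zero (ne_of_gt hBpos), Real.log_one]
  rw [le_div_iff₀ (by linarith : (0:ℝ) < 0 - Real.log (collProbH d β H))]
  nlinarith [hlogAB]
end
end

section
/- Let d be a positive integer, let 0 ≤ β < α < 1, and let w_0, w_1, …, w_d be nonnegative reals with Σ_{i=0}^{d} w_i = 1 and w_0 < 1. Then log(2/(1 + Σ_{i=0}^{d} α^i w_i)) / log(2/(1 + Σ_{i=0}^{d} β^i w_i)) ≥ log(2/(1+α)) / log(2/(1+β)), with equality if and only if w_1 = 1. -/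
open Real Set Filter

noncomputable def Lf (y : ℝ) : ℝ := Real.log (2 / (1 + y))
noncomputable def rhoF (y : ℝ) : ℝ := (1 + y) * Lf y

lemma Lf_eq {y : ℝ} (hy : -1 < y) : Lf y = Real.log 2 - Real.log (1 + y) := by
  rw [Lf, Real.log_div two_ne_zero (by linarith)]

lemma Lf_pos {y : ℝ} (h0 : -1 < y) (h1 : y < 1) : 0 < Lf y := by
  apply Real.log_pos
  rw [lt_div_iff₀ (by linarith)]; linarith

lemma Lf_one : Lf 1 = 0 := by norm_num [Lf]

lemma rhoF_one : rhoF 1 = 0 := by simp [rhoF, Lf_one]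

lemma rhoF_pos {y : ℝ} (h0 : 0 ≤ y) (h1 : y < 1) : 0 < rhoF y :=
  mul_pos (by linarith) (Lf_pos (by linarith) h1)

lemma Lf_ge {y : ℝ} (hy : -1 < y) : (1 - y) / 2 ≤ Lf y := by
  have h := Real.log_le_sub_one_of_pos (x := (1 + y) / 2) (by linarith)
  have h2 : Real.log ((1 + y) / 2) = -Lf y := by
    rw [Lf, ← Real.log_inv]; congr 1; field_simp
  rw [h2] at h; linarith

lemma rhoF_ge {y : ℝ} (hy : -1 < y) : (1 + y) * ((1 - y) / 2) ≤ rhoF y :=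
  mul_le_mul_of_nonneg_left (Lf_ge hy) (by linarith)

lemma hasDerivAt_Lf {y : ℝ} (hy : -1 < y) : HasDerivAt Lf (-(1 + y)⁻¹) y := by
  have h1 : HasDerivAt (fun z : ℝ => 1 + z) 1 y := (hasDerivAt_id y).const_add 1
  have h2 : HasDerivAt (fun z : ℝ => Real.log 2 - Real.log (1 + z)) (-(1 + y)⁻¹) y := by
    have := (h1.log (by linarith)).const_sub (Real.log 2)
    simpa using this
  refine h2.congr_of_eventuallyEq ?_
  filter_upwards [Ioi_mem_nhds hy] with z hz
  exact Lf_eq hz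

lemma hasDerivAt_rhoF {y : ℝ} (hy : -1 < y) : HasDerivAt rhoF (Lf y - 1) y := by
  have h1 : HasDerivAt (fun z : ℝ => 1 + z) 1 y := (hasDerivAt_id y).const_add 1
  have h := h1.mul (hasDerivAt_Lf hy)
  have hne : (1 + y) ≠ 0 := by linarith
  have he : 1 * Lf y + (1 + y) * -(1 + y)⁻¹ = Lf y - 1 := by
    field_simp; ring
  rw [he] at h
  exact h

lemma rhoF_strictConcave : StrictConcaveOn ℝ (Icc (0:ℝ) 1) rhoF := by
  apply strictConcaveOn_of_deriv2_neg (convex_Icc 0 1)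
  · intro y hy
    exact (hasDerivAt_rhoF (by linarith [hy.1] : (-1:ℝ) < y)).continuousAt.continuousWithinAt
  · intro x hx
    rw [interior_Icc] at hx
    have hx1 : (-1:ℝ) < x := by linarith [hx.1]
    have e1 : deriv (deriv rhoF) x = deriv (fun y => Lf y - 1) x := by
      apply Filter.EventuallyEq.deriv_eq
      filter_upwards [Ioi_mem_nhds hx1] with z hz
      exact (hasDerivAt_rhoF hz).deriv
    have e2 : deriv (fun y => Lf y - 1) x = -(1 + x)⁻¹ :=
      ((hasDerivAt_Lf hx1).sub_const 1).deriv
    simp only [Function.iterate_succ, Function.iterate_zero, Function.comp_apply, Function.id_comp, id]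
    rw [e1, e2]
    have : (0:ℝ) < (1 + x)⁻¹ := inv_pos.2 (by linarith)
    linarith

lemma pow_le_self' {t : ℝ} (h0 : 0 ≤ t) (h1 : t ≤ 1) (n : ℕ) : t ^ (n + 1) ≤ t := by
  calc t ^ (n + 1) ≤ t ^ 1 := pow_le_pow_of_le_one h0 h1 (by omega)
  _ = t := pow_one t

/-- key estimate: `t * (Lf (t^(j+2)) - Lf t) < (j+1) * rhoF t` for `t ∈ (0,1)`. -/
lemma key_bracket (j : ℕ) {t : ℝ} (h0 : 0 < t) (h1 : t < 1) :
    t * (Lf (t ^ (j + 2)) - Lf t) - ((j : ℝ) + 1) * rhoF t < 0 := by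
  set i : ℕ := j + 2 with hi
  have hti : 0 < t ^ i := pow_pos h0 i
  have hti1 : t ^ i ≤ t := pow_le_self' h0.le h1.le (j + 1)
  -- step 1 : Lf (t^i) - Lf t ≤ t - t^i
  have s1 : Lf (t ^ i) - Lf t ≤ t - t ^ i := by
    have e1 : Lf (t ^ i) - Lf t = Real.log ((1 + t) / (1 + t ^ i)) := by
      rw [Lf_eq (by linarith : (-1:ℝ) < t ^ i), Lf_eq (by linarith : (-1:ℝ) < t),
        Real.log_div (by linarith) (by linarith)]
      ring
    rw [e1]
    have h2 := Real.log_le_sub_one_of_pos (x := (1 + t) / (1 + t ^ i))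
      (by positivity)
    have h3 : (1 + t) / (1 + t ^ i) - 1 = (t - t ^ i) / (1 + t ^ i) := by
      field_simp
      ring
    have h4 : (t - t ^ i) / (1 + t ^ i) ≤ t - t ^ i :=
      div_le_self (by linarith) (by linarith)
    linarith
  -- step 2 : t - t^i ≤ (j+1) * (1 - t) * t  (Bernoulli)
  have s2 : t - t ^ i ≤ ((j : ℝ) + 1) * (1 - t) * t := by
    have hb := one_add_mul_le_pow (a := t - 1) (by linarith) (j + 1)
    have hb' : 1 + ((j : ℝ) + 1) * (t - 1) ≤ t ^ (j + 1) := by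
      have : (1 : ℝ) + (t - 1) = t := by ring
      rw [this] at hb
      push_cast at hb
      convert hb using 2 <;> push_cast <;> ring
    have : t ^ i = t ^ (j + 1) * t := by rw [hi]; ring
    nlinarith [h0.le]
  -- step 3 : rhoF lower bound
  have s3 : (1 + t) * ((1 - t) / 2) ≤ rhoF t := rhoF_ge (by linarith)
  -- combine
  have s4 : t * (Lf (t ^ i) - Lf t) ≤ ((j : ℝ) + 1) * (1 - t) * t ^ 2 := by
    nlinarith
  have s5 : ((j : ℝ) + 1) * (1 - t) * t ^ 2 < ((j : ℝ) + 1) * ((1 + t) * ((1 - t) / 2)) := by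
    have hj : (0 : ℝ) < (j : ℝ) + 1 := by positivity
    have ht2 : t ^ 2 < (1 + t) / 2 := by nlinarith
    have hpos : (0:ℝ) < ((j : ℝ) + 1) * (1 - t) := by
      have : (0:ℝ) < 1 - t := by linarith
      positivity
    have hh := mul_lt_mul_of_pos_left ht2 hpos
    nlinarith [hh]
  have hj : (0 : ℝ) < (j : ℝ) + 1 := by positivity
  nlinarith

/-- per-term key lemma : `(j+2) * x^(j+1) * rhoF x < rhoF (x^(j+2))` for `x ∈ (0,1)`. -/
lemma key_term (j : ℕ) {x : ℝ} (hx0 : 0 < x) (hx1 : x < 1) :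
    ((j : ℝ) + 2) * x ^ (j + 1) * rhoF x < rhoF (x ^ (j + 2)) := by
  set F : ℝ → ℝ := fun t => rhoF (t ^ (j + 2)) - ((j : ℝ) + 2) * t ^ (j + 1) * rhoF t with hF
  have hD : ∀ t : ℝ, 0 < t →
      HasDerivAt F (((j : ℝ) + 2) * t ^ j *
        (t * (Lf (t ^ (j + 2)) - Lf t) - ((j : ℝ) + 1) * rhoF t)) t := by
    intro t ht
    have h1 : HasDerivAt (fun s : ℝ => rhoF (s ^ (j + 2)))
        ((Lf (t ^ (j + 2)) - 1) * ((j + 2 : ℕ) * t ^ (j + 1))) t := by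
      have hp : HasDerivAt (fun s : ℝ => s ^ (j + 2)) ((j + 2 : ℕ) * t ^ (j + 1)) t := by
        simpa using hasDerivAt_pow (j + 2) t
      have hneg : (-1:ℝ) < t ^ (j + 2) := by
        have : (0:ℝ) < t ^ (j + 2) := by positivity
        linarith
      have hcomp : HasDerivAt (rhoF ∘ fun s : ℝ => s ^ (j + 2))
          ((Lf (t ^ (j + 2)) - 1) * ((j + 2 : ℕ) * t ^ (j + 1))) t :=
        HasDerivAt.comp t (hasDerivAt_rhoF hneg) hp
      exact hcomp
    have h2 : HasDerivAt (fun s : ℝ => ((j : ℝ) + 2) * s ^ (j + 1) * rhoF s)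
        ((((j : ℝ) + 2) * ((j + 1 : ℕ) * t ^ j)) * rhoF t
          + (((j : ℝ) + 2) * t ^ (j + 1)) * (Lf t - 1)) t := by
      have hu : HasDerivAt (fun s : ℝ => ((j : ℝ) + 2) * s ^ (j + 1))
          (((j : ℝ) + 2) * ((j + 1 : ℕ) * t ^ j)) t := by
        simpa using (hasDerivAt_pow (j + 1) t).const_mul ((j : ℝ) + 2)
      exact hu.mul (hasDerivAt_rhoF (by linarith : (-1:ℝ) < t))
    have h3 := h1.sub h2
    refine h3.congr_deriv ?_
    push_cast
    ring
  have hanti : StrictAntiOn F (Icc x 1) := by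
    apply strictAntiOn_of_deriv_neg (convex_Icc x 1)
    · intro t ht
      exact (hD t (lt_of_lt_of_le hx0 ht.1)).continuousAt.continuousWithinAt
    · intro t ht
      rw [interior_Icc] at ht
      have ht0 : 0 < t := lt_trans hx0 ht.1
      rw [(hD t ht0).deriv]
      have hbr := key_bracket j ht0 ht.2
      have hpos : (0:ℝ) < ((j : ℝ) + 2) * t ^ j := by positivity
      exact mul_neg_of_pos_of_neg hpos hbr
  have h01 : F 1 < F x :=
    hanti (left_mem_Icc.2 hx1.le) (right_mem_Icc.2 hx1.le) hx1
  have hF1 : F 1 = 0 := by simp [hF, rhoF_one]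
  rw [hF1] at h01
  simp only [hF] at h01
  linarith

lemma per_term (n : ℕ) {x : ℝ} (hx0 : 0 < x) (hx1 : x < 1) :
    (n : ℝ) * x ^ (n - 1) * rhoF x ≤ rhoF (x ^ n) := by
  match n with
  | 0 => simp [rhoF_one]
  | 1 => simp
  | (j+2) =>
    have := (key_term j hx0 hx1).le
    have he : ((j + 2 : ℕ) : ℝ) = (j : ℝ) + 2 := by push_cast; ring
    rw [he]
    simpa using this

lemma sum_fin_two {d : ℕ} (hd : 0 < d) (f : Fin (d + 1) → ℝ)
    (h : ∀ i : Fin (d + 1), 2 ≤ (i : ℕ) → f i = 0) :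
    ∑ i, f i = f 0 + f 1 := by
  have hv1 : ((1 : Fin (d + 1)) : ℕ) = 1 := by
    simp [Fin.val_one', Nat.mod_eq_of_lt (by omega : 1 < d + 1)]
  have h01 : (0 : Fin (d + 1)) ≠ 1 := by
    intro hc
    have := congrArg (Fin.val) hc
    rw [hv1] at this
    simp at this
  rw [← Finset.sum_subset (Finset.subset_univ {0, 1})]
  · rw [Finset.sum_pair h01]
  · intro i _ hi
    simp only [Finset.mem_insert, Finset.mem_singleton] at hi
    push_neg at hi
    apply h
    have h0 : (i : ℕ) ≠ 0 := by
      intro hc; exact hi.1 (Fin.ext (by simp [hc]))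
    have h1 : (i : ℕ) ≠ 1 := by
      intro hc; exact hi.2 (Fin.ext (by rw [hv1, hc]))
    omega

lemma key_sum (d : ℕ) (hd : 0 < d) (w : Fin (d + 1) → ℝ) (hw : ∀ i, 0 ≤ w i)
    (hsum : ∑ i, w i = 1) (hw0 : w 0 < 1) (hw1 : w 1 < 1)
    {x : ℝ} (hx0 : 0 < x) (hx1 : x < 1) :
    (∑ i : Fin (d + 1), ((i : ℕ) : ℝ) * x ^ ((i : ℕ) - 1) * w i) * rhoF x
      < rhoF (∑ i : Fin (d + 1), x ^ (i : ℕ) * w i) := by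
  have hv1 : ((1 : Fin (d + 1)) : ℕ) = 1 := by simp [Fin.val_one', Nat.mod_eq_of_lt (by omega : 1 < d + 1)]
  have hmem : ∀ i : Fin (d + 1), x ^ (i : ℕ) ∈ Icc (0:ℝ) 1 :=
    fun i => ⟨by positivity, pow_le_one₀ hx0.le hx1.le⟩
  have hjensen : (∑ i : Fin (d + 1), w i * rhoF (x ^ (i : ℕ)))
      ≤ rhoF (∑ i : Fin (d + 1), w i * x ^ (i : ℕ)) := by
    have := rhoF_strictConcave.concaveOn.le_map_sum (t := Finset.univ)
      (w := w) (p := fun i : Fin (d+1) => x ^ (i : ℕ))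
      (fun i _ => hw i) hsum (fun i _ => hmem i)
    simpa [smul_eq_mul] using this
  have hsum_comm : (∑ i : Fin (d + 1), w i * x ^ (i : ℕ))
      = ∑ i : Fin (d + 1), x ^ (i : ℕ) * w i := by
    exact Finset.sum_congr rfl fun i _ => mul_comm _ _
  rw [hsum_comm] at hjensen
  rw [Finset.sum_mul]
  have hle : ∀ i : Fin (d + 1),
      ((i : ℕ) : ℝ) * x ^ ((i : ℕ) - 1) * w i * rhoF x ≤ w i * rhoF (x ^ (i : ℕ)) := by
    intro i
    have h := per_term (i : ℕ) hx0 hx1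
    calc ((i : ℕ) : ℝ) * x ^ ((i : ℕ) - 1) * w i * rhoF x
        = w i * (((i : ℕ) : ℝ) * x ^ ((i : ℕ) - 1) * rhoF x) := by ring
      _ ≤ w i * rhoF (x ^ (i : ℕ)) := mul_le_mul_of_nonneg_left h (hw i)
  by_cases hA : ∃ i : Fin (d + 1), 2 ≤ (i : ℕ) ∧ 0 < w i
  · obtain ⟨i₀, hi₀2, hi₀w⟩ := hA
    have hstrict : ((i₀ : ℕ) : ℝ) * x ^ ((i₀ : ℕ) - 1) * w i₀ * rhoF x
        < w i₀ * rhoF (x ^ (i₀ : ℕ)) := by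
      obtain ⟨j, hj⟩ : ∃ j, (i₀ : ℕ) = j + 2 := ⟨(i₀ : ℕ) - 2, by omega⟩
      rw [hj]
      have h := key_term j hx0 hx1
      have he : ((j + 2 : ℕ) : ℝ) = (j : ℝ) + 2 := by push_cast; ring
      rw [he]
      calc ((j : ℝ) + 2) * x ^ (j + 2 - 1) * w i₀ * rhoF x
          = w i₀ * (((j : ℝ) + 2) * x ^ (j + 1) * rhoF x) := by
            rw [show j + 2 - 1 = j + 1 from rfl]; ring
        _ < w i₀ * rhoF (x ^ (j + 2)) := by
            exact mul_lt_mul_of_pos_left h hi₀w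
    have h1 : (∑ i : Fin (d + 1), ((i : ℕ) : ℝ) * x ^ ((i : ℕ) - 1) * w i * rhoF x)
        < ∑ i : Fin (d + 1), w i * rhoF (x ^ (i : ℕ)) :=
      Finset.sum_lt_sum (fun i _ => hle i) ⟨i₀, Finset.mem_univ _, hstrict⟩
    linarith
  · push_neg at hA
    have hz : ∀ i : Fin (d + 1), 2 ≤ (i : ℕ) → w i = 0 :=
      fun i h2 => le_antisymm (hA i h2) (hw i)
    have hred1 : (∑ i : Fin (d + 1), x ^ (i : ℕ) * w i) = w 0 + x * w 1 := by
      rw [sum_fin_two hd _ (fun i h2 => by rw [hz i h2, mul_zero])]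
      rw [hv1]
      norm_num
      try ring
    have hred2 : (∑ i : Fin (d + 1), ((i : ℕ) : ℝ) * x ^ ((i : ℕ) - 1) * w i) = w 1 := by
      rw [sum_fin_two hd _ (fun i h2 => by rw [hz i h2, mul_zero])]
      rw [hv1]
      norm_num
    have hw01 : w 0 + w 1 = 1 := by
      rw [← hsum, sum_fin_two hd _ hz]
    have hw0pos : 0 < w 0 := by linarith
    have hw1pos : 0 < w 1 := by linarith
    have hgl : (∑ i : Fin (d + 1), ((i : ℕ) : ℝ) * x ^ ((i : ℕ) - 1) * w i * rhoF x)
        = w 1 * rhoF x := by rw [← Finset.sum_mul, hred2]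
    rw [hgl, hred1]
    have hsc := rhoF_strictConcave.2 (right_mem_Icc.2 zero_le_one)
      (⟨hx0.le, hx1.le⟩ : x ∈ Icc (0:ℝ) 1) (by intro hc; linarith [hc ▸ hx1] : (1:ℝ) ≠ x)
      hw0pos hw1pos hw01
    rw [smul_eq_mul, smul_eq_mul, smul_eq_mul, smul_eq_mul, rhoF_one] at hsc
    calc w 1 * rhoF x = w 0 * 0 + w 1 * rhoF x := by ring
      _ < rhoF (w 0 * 1 + w 1 * x) := hsc
      _ = rhoF (w 0 + x * w 1) := by ring_nf

lemma main_strict (d : ℕ) (hd : 0 < d) (w : Fin (d + 1) → ℝ) (hw : ∀ i, 0 ≤ w i)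
    (hsum : ∑ i, w i = 1) (hw0 : w 0 < 1) (hw1 : w 1 < 1)
    {a b : ℝ} (hb : 0 ≤ b) (hba : b < a) (ha : a < 1) :
    Lf (∑ i : Fin (d + 1), b ^ (i : ℕ) * w i) * Lf a
      < Lf (∑ i : Fin (d + 1), a ^ (i : ℕ) * w i) * Lf b := by
  set S : ℝ → ℝ := fun x => ∑ i : Fin (d + 1), x ^ (i : ℕ) * w i with hSdef
  set S' : ℝ → ℝ := fun x => ∑ i : Fin (d + 1), ((i : ℕ) : ℝ) * x ^ ((i : ℕ) - 1) * w i
    with hS'def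
  have hS : ∀ x : ℝ, HasDerivAt S (S' x) x := by
    intro x
    rw [hSdef, hS'def]
    exact HasDerivAt.fun_sum (fun i _ => (hasDerivAt_pow (i : ℕ) x).mul_const (w i))
  have hjex : ∃ j : Fin (d + 1), (j : ℕ) ≠ 0 ∧ 0 < w j := by
    by_contra hc
    push_neg at hc
    have hz : ∀ j : Fin (d + 1), j ≠ 0 → w j = 0 := by
      intro j hj
      have hjv : (j : ℕ) ≠ 0 := fun h => hj (Fin.ext (by simp [h]))
      exact le_antisymm (hc j hjv) (hw j)
    have he : (∑ i, w i) = w 0 :=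
      Finset.sum_eq_single 0 (fun i _ hi => hz i hi) (by simp)
    rw [hsum] at he; linarith
  have hSmem : ∀ x ∈ Ico (0:ℝ) 1, S x ∈ Ico (0:ℝ) 1 := by
    intro x hx
    constructor
    · apply Finset.sum_nonneg
      intro i _
      exact mul_nonneg (pow_nonneg hx.1 _) (hw i)
    · obtain ⟨j, hj0, hjw⟩ := hjex
      have hlt : S x < ∑ i, w i := by
        apply Finset.sum_lt_sum
        · intro i _
          exact mul_le_of_le_one_left (hw i) (pow_le_one₀ hx.1 hx.2.le)
        · refine ⟨j, Finset.mem_univ _, ?_⟩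
          have hp : x ^ (j : ℕ) < 1 := pow_lt_one₀ hx.1 hx.2 hj0
          nlinarith
      rw [hsum] at hlt
      exact hlt
  set G : ℝ → ℝ := fun x => Real.log (Lf (S x)) - Real.log (Lf x) with hGdef
  have hG : ∀ x ∈ Ico (0:ℝ) 1, HasDerivAt G
      ((-(1 + S x)⁻¹ * S' x) / Lf (S x) - (-(1 + x)⁻¹) / Lf x) x := by
    intro x hx
    have hSm := hSmem x hx
    have h1 : HasDerivAt (Lf ∘ S) (-(1 + S x)⁻¹ * S' x) x :=
      HasDerivAt.comp x (hasDerivAt_Lf (by linarith [hSm.1])) (hS x)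
    have h2 : HasDerivAt (fun y => Real.log (Lf (S y)))
        ((-(1 + S x)⁻¹ * S' x) / Lf (S x)) x := by
      have := h1.log (ne_of_gt (Lf_pos (by linarith [hSm.1]) hSm.2))
      simpa [Function.comp] using this
    have h3 : HasDerivAt (fun y => Real.log (Lf y)) ((-(1 + x)⁻¹) / Lf x) x :=
      (hasDerivAt_Lf (by linarith [hx.1])).log (ne_of_gt (Lf_pos (by linarith [hx.1]) hx.2))
    exact h2.sub h3
  have hmono : StrictMonoOn G (Ico (0:ℝ) 1) := by
    apply strictMonoOn_of_deriv_pos (convex_Ico 0 1)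
    · intro x hx
      exact (hG x hx).continuousAt.continuousWithinAt
    · intro x hx
      rw [interior_Ico] at hx
      have hxm : x ∈ Ico (0:ℝ) 1 := ⟨hx.1.le, hx.2⟩
      rw [(hG x hxm).deriv]
      have hSm := hSmem x hxm
      have key : S' x * ((1 + x) * Lf x) < (1 + S x) * Lf (S x) :=
        key_sum d hd w hw hsum hw0 hw1 hx.1 hx.2
      have hA : 0 < Lf (S x) := Lf_pos (by linarith [hSm.1]) hSm.2
      have hB : 0 < Lf x := Lf_pos (by linarith [hx.1]) hx.2
      have h1x : (0:ℝ) < 1 + x := by linarith [hx.1]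
      have h1S : (0:ℝ) < 1 + S x := by linarith [hSm.1]
      have goal_eq : (-(1 + S x)⁻¹ * S' x) / Lf (S x) - (-(1 + x)⁻¹) / Lf x
          = (1 + x)⁻¹ / Lf x - S' x * (1 + S x)⁻¹ / Lf (S x) := by ring
      rw [goal_eq, sub_pos, div_lt_div_iff₀ hA hB]
      have hc : (0:ℝ) < (1 + x)⁻¹ * (1 + S x)⁻¹ := by positivity
      have hm := mul_lt_mul_of_pos_right key hc
      have e1 : (S' x * ((1 + x) * Lf x)) * ((1 + x)⁻¹ * (1 + S x)⁻¹)
          = S' x * (1 + S x)⁻¹ * Lf x := by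
        field_simp
      have e2 : ((1 + S x) * Lf (S x)) * ((1 + x)⁻¹ * (1 + S x)⁻¹)
          = (1 + x)⁻¹ * Lf (S x) := by
        field_simp
      linarith [hm, e1, e2]
  have hlt := hmono (⟨hb, lt_trans hba ha⟩ : b ∈ Ico (0:ℝ) 1)
    (⟨le_trans hb hba.le, ha⟩ : a ∈ Ico (0:ℝ) 1) hba
  have hSa := hSmem a ⟨le_trans hb hba.le, ha⟩
  have hSb := hSmem b ⟨hb, lt_trans hba ha⟩
  have pA : 0 < Lf (S a) := Lf_pos (by linarith [hSa.1]) hSa.2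
  have pB : 0 < Lf (S b) := Lf_pos (by linarith [hSb.1]) hSb.2
  have pC : 0 < Lf a := Lf_pos (by linarith [hb, hba.le]) ha
  have pD : 0 < Lf b := Lf_pos (by linarith) (lt_trans hba ha)
  have h2 : Real.log (Lf (S b) * Lf a) < Real.log (Lf (S a) * Lf b) := by
    rw [Real.log_mul (ne_of_gt pB) (ne_of_gt pC), Real.log_mul (ne_of_gt pA) (ne_of_gt pD)]
    simp only [hGdef] at hlt
    linarith
  exact (Real.log_lt_log_iff (mul_pos pB pC) (mul_pos pA pD)).1 h2

lemma Ssum_mem (d : ℕ) (w : Fin (d + 1) → ℝ) (hw : ∀ i, 0 ≤ w i)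
    (hsum : ∑ i, w i = 1) (hw0 : w 0 < 1) {x : ℝ} (hx : x ∈ Ico (0:ℝ) 1) :
    (∑ i : Fin (d + 1), x ^ (i : ℕ) * w i) ∈ Ico (0:ℝ) 1 := by
  have hjex : ∃ j : Fin (d + 1), (j : ℕ) ≠ 0 ∧ 0 < w j := by
    by_contra hc
    push_neg at hc
    have hz : ∀ j : Fin (d + 1), j ≠ 0 → w j = 0 := by
      intro j hj
      have hjv : (j : ℕ) ≠ 0 := fun h => hj (Fin.ext (by simp [h]))
      exact le_antisymm (hc j hjv) (hw j)
    have he : (∑ i, w i) = w 0 :=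
      Finset.sum_eq_single 0 (fun i _ hi => hz i hi) (by simp)
    rw [hsum] at he; linarith
  constructor
  · apply Finset.sum_nonneg
    intro i _
    exact mul_nonneg (pow_nonneg hx.1 _) (hw i)
  · obtain ⟨j, hj0, hjw⟩ := hjex
    have hlt : (∑ i : Fin (d + 1), x ^ (i : ℕ) * w i) < ∑ i, w i := by
      apply Finset.sum_lt_sum
      · intro i _
        exact mul_le_of_le_one_left (hw i) (pow_le_one₀ hx.1 hx.2.le)
      · refine ⟨j, Finset.mem_univ _, ?_⟩
        have hp : x ^ (j : ℕ) < 1 := pow_lt_one₀ hx.1 hx.2 hj0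
        nlinarith
    rw [hsum] at hlt
    exact hlt


/-- for `0 ≤ β < α < 1` and nonnegative weights `w_0, …, w_d` summing to 1
with `w_0 < 1`,
`log(2/(1 + ∑ α^i w_i)) / log(2/(1 + ∑ β^i w_i)) ≥ log(2/(1+α)) / log(2/(1+β))`,
with equality if and only if `w_1 = 1`. -/
theorem weight_assignment_lower_bound (d : ℕ) (hd : 0 < d) (α β : ℝ)
    (hβ : 0 ≤ β) (hβα : β < α) (hα : α < 1)
    (w : Fin (d + 1) → ℝ) (hw : ∀ i, 0 ≤ w i) (hsum : ∑ i, w i = 1) (hw0 : w 0 < 1) :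
    Real.log (2 / (1 + ∑ i : Fin (d + 1), α ^ (i : ℕ) * w i)) /
        Real.log (2 / (1 + ∑ i : Fin (d + 1), β ^ (i : ℕ) * w i)) ≥
      Real.log (2 / (1 + α)) / Real.log (2 / (1 + β)) ∧
    (Real.log (2 / (1 + ∑ i : Fin (d + 1), α ^ (i : ℕ) * w i)) /
        Real.log (2 / (1 + ∑ i : Fin (d + 1), β ^ (i : ℕ) * w i)) =
      Real.log (2 / (1 + α)) / Real.log (2 / (1 + β)) ↔ w 1 = 1) := by
  have e : ∀ y : ℝ, Real.log (2 / (1 + y)) = Lf y := fun y => rfl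
  simp only [e]
  have hα0 : 0 ≤ α := le_trans hβ hβα.le
  have hβ1 : β < 1 := lt_trans hβα hα
  have hw1le : w 1 ≤ 1 := by
    have h := Finset.single_le_sum (f := w) (fun i _ => hw i) (Finset.mem_univ 1)
    rw [hsum] at h
    exact h
  rcases lt_or_eq_of_le hw1le with hlt | heq
  · have hstrict := main_strict d hd w hw hsum hw0 hlt hβ hβα hα
    have hSa := Ssum_mem d w hw hsum hw0 (⟨hα0, hα⟩ : α ∈ Ico (0:ℝ) 1)
    have hSb := Ssum_mem d w hw hsum hw0 (⟨hβ, hβ1⟩ : β ∈ Ico (0:ℝ) 1)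
    have pA : 0 < Lf (∑ i : Fin (d + 1), α ^ (i : ℕ) * w i) :=
      Lf_pos (by linarith [hSa.1]) hSa.2
    have pB : 0 < Lf (∑ i : Fin (d + 1), β ^ (i : ℕ) * w i) :=
      Lf_pos (by linarith [hSb.1]) hSb.2
    have pC : 0 < Lf α := Lf_pos (by linarith) hα
    have pD : 0 < Lf β := Lf_pos (by linarith) hβ1
    constructor
    · rw [ge_iff_le, div_le_div_iff₀ pD pB]
      nlinarith [hstrict]
    · constructor
      · intro hEq
        exfalso
        rw [div_eq_div_iff (ne_of_gt pB) (ne_of_gt pD)] at hEq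
        nlinarith [hstrict]
      · intro h1
        exact absurd h1 (ne_of_lt hlt)
  · have hzz : ∀ i : Fin (d + 1), i ≠ 1 → w i = 0 := by
      intro i hi
      have hsplit := Finset.add_sum_erase Finset.univ w (Finset.mem_univ (1 : Fin (d + 1)))
      have hge : (0:ℝ) ≤ ∑ j ∈ Finset.univ.erase (1 : Fin (d + 1)), w j :=
        Finset.sum_nonneg fun j _ => hw j
      have hzero : (∑ j ∈ Finset.univ.erase (1 : Fin (d + 1)), w j) = 0 := by
        rw [hsum] at hsplit
        linarith [heq ▸ hsplit]
      exact (Finset.sum_eq_zero_iff_of_nonneg (fun j _ => hw j)).1 hzero i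
        (Finset.mem_erase.2 ⟨hi, Finset.mem_univ i⟩)
    have hv1 : ((1 : Fin (d + 1)) : ℕ) = 1 := by
      simp [Fin.val_one', Nat.mod_eq_of_lt (by omega : 1 < d + 1)]
    have hSid : ∀ x : ℝ, (∑ i : Fin (d + 1), x ^ (i : ℕ) * w i) = x := by
      intro x
      rw [Finset.sum_eq_single 1 (fun i _ hi => by rw [hzz i hi, mul_zero]) (by simp)]
      rw [heq, hv1, pow_one, mul_one]
    rw [hSid α, hSid β]
    exact ⟨le_refl _, ⟨fun _ => heq, fun _ => rfl⟩⟩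
end

section
/- Let d be a positive integer, let 0 < β < α < 1, and let w_0, w_1, …, w_d be nonnegative reals with Σ_{i=0}^{d} w_i = 1 and 0 < w_0 < 1. Define s(x) = Σ_{i=0}^{d} w_i x^i. Then ((1 + s(β))/(1 - β)) · log((1 + s(β))/2) > ((1 + s(α))/(1 - α)) · log((1 + s(α))/2). -/
open Real Finset

/-- for `0 < β < α < 1` and nonnegative weights summing to 1 with
`0 < w_0 < 1`, letting `s(x) = ∑_{i=0}^d w_i x^i`, we have
`((1 + s(β))/(1 - β)) log((1 + s(β))/2) > ((1 + s(α))/(1 - α)) log((1 + s(α))/2)`. -/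
theorem g_beta_gt_g_alpha (d : ℕ) (hd : 0 < d) (α β : ℝ)
    (hβ : 0 < β) (hβα : β < α) (hα : α < 1)
    (w : Fin (d + 1) → ℝ) (hw : ∀ i, 0 ≤ w i) (hsum : ∑ i, w i = 1)
    (hw0pos : 0 < w 0) (hw0lt : w 0 < 1) :
    ((1 + ∑ i, w i * β ^ (i : ℕ)) / (1 - β)) *
        Real.log ((1 + ∑ i, w i * β ^ (i : ℕ)) / 2) >
      ((1 + ∑ i, w i * α ^ (i : ℕ)) / (1 - α)) *
        Real.log ((1 + ∑ i, w i * α ^ (i : ℕ)) / 2) := by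
  set s : ℝ → ℝ := fun x => ∑ i, w i * x ^ (i : ℕ) with hs_def
  set s' : ℝ → ℝ := fun x => ∑ i, w i * ((i : ℕ) * x ^ ((i : ℕ) - 1)) with hs'_def
  -- derivative of s
  have hsderiv : ∀ x : ℝ, HasDerivAt s (s' x) x := by
    intro x
    exact HasDerivAt.fun_sum fun i _ => (hasDerivAt_pow (i : ℕ) x).const_mul (w i)
  -- s' nonneg on x ≥ 0
  have hs'nonneg : ∀ x : ℝ, 0 ≤ x → 0 ≤ s' x := by
    intro x hx
    apply Finset.sum_nonneg
    intro i _
    exact mul_nonneg (hw i) (by positivity)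
  -- lower bound : w 0 ≤ s x for 0 ≤ x
  have hslb : ∀ x : ℝ, 0 ≤ x → w 0 ≤ s x := by
    intro x hx
    have : w 0 * x ^ ((0 : Fin (d+1)) : ℕ) ≤ s x := by
      apply Finset.single_le_sum (f := fun i : Fin (d+1) => w i * x ^ (i : ℕ))
      · intro i _; exact mul_nonneg (hw i) (by positivity)
      · exact Finset.mem_univ _
    simpa using this
  have hspos : ∀ x : ℝ, 0 ≤ x → 0 < s x := fun x hx => lt_of_lt_of_le hw0pos (hslb x hx)
  -- upper bound : s x < 1 for 0 < x < 1
  have hexi : ∃ i : Fin (d+1), i ≠ 0 ∧ 0 < w i := by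
    by_contra h
    push_neg at h
    have : ∑ i, w i = w 0 := Fintype.sum_eq_single 0 fun i hi => le_antisymm (h i hi) (hw i)
    rw [hsum] at this
    exact absurd this.symm (ne_of_lt hw0lt)
  have hsub : ∀ x : ℝ, 0 < x → x < 1 → s x < 1 := by
    intro x hx0 hx1
    obtain ⟨i₀, hi₀, hwi₀⟩ := hexi
    have : s x < ∑ i, w i := by
      apply Finset.sum_lt_sum
      · intro i _
        calc w i * x ^ (i : ℕ) ≤ w i * 1 := by
              apply mul_le_mul_of_nonneg_left _ (hw i)
              exact pow_le_one₀ hx0.le hx1.le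
          _ = w i := mul_one _
      · refine ⟨i₀, Finset.mem_univ _, ?_⟩
        have hpow : x ^ (i₀ : ℕ) < 1 := by
          apply pow_lt_one₀ hx0.le hx1
          intro h
          exact hi₀ (Fin.ext (by simp [h]))
        nlinarith
    rwa [hsum] at this
  -- convexity-type bound : s' x * (1 - x) ≤ 1 - s x for 0 < x < 1
  have hconv : ∀ x : ℝ, 0 < x → x < 1 → s' x * (1 - x) ≤ 1 - s x := by
    intro x hx0 hx1
    have key : ∀ i : ℕ, ((i : ℝ) * x ^ (i - 1)) * (1 - x) ≤ 1 - x ^ i := by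
      intro i
      have hgeom : (1 - x) * ∑ j ∈ Finset.range i, x ^ j = 1 - x ^ i := by
        have := geom_sum_mul x i
        nlinarith [this]
      have hterm : ∀ j ∈ Finset.range i, x ^ (i - 1) ≤ x ^ j := by
        intro j hj
        apply pow_le_pow_of_le_one hx0.le hx1.le
        have := Finset.mem_range.mp hj
        omega
      have hsumge : (i : ℝ) * x ^ (i - 1) ≤ ∑ j ∈ Finset.range i, x ^ j := by
        calc (i : ℝ) * x ^ (i - 1) = ∑ _j ∈ Finset.range i, x ^ (i - 1) := by
              simp [Finset.sum_const, mul_comm]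
          _ ≤ ∑ j ∈ Finset.range i, x ^ j := Finset.sum_le_sum hterm
      nlinarith
    calc s' x * (1 - x) = ∑ i, w i * (((i : ℕ) : ℝ) * x ^ ((i : ℕ) - 1) * (1 - x)) := by
          rw [hs'_def]; rw [Finset.sum_mul]; congr 1; ext i; ring
      _ ≤ ∑ i, w i * (1 - x ^ (i : ℕ)) := by
          apply Finset.sum_le_sum
          intro i _
          exact mul_le_mul_of_nonneg_left (key (i : ℕ)) (hw i)
      _ = 1 - s x := by
          rw [hs_def]
          simp [mul_sub, Finset.sum_sub_distrib, hsum]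
  -- the function g
  set g : ℝ → ℝ := fun x => ((1 + s x) / (1 - x)) * Real.log ((1 + s x) / 2) with hg_def
  -- derivative of g and its negativity on (0,1)
  have hgderiv : ∀ x : ℝ, 0 < x → x < 1 →
      HasDerivAt g ((s' x * (1 - x) - (1 + s x) * (-1)) / (1 - x) ^ 2 * Real.log ((1 + s x) / 2)
        + (1 + s x) / (1 - x) * ((s' x / 2) / ((1 + s x) / 2))) x := by
    intro x hx0 hx1
    have h1x : (1 : ℝ) - x ≠ 0 := by linarith
    have hspos' : (0 : ℝ) < 1 + s x := by linarith [hspos x hx0.le]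
    have hA : HasDerivAt (fun y => (1 + s y) / (1 - y))
        ((s' x * (1 - x) - (1 + s x) * (-1)) / (1 - x) ^ 2) x := by
      exact HasDerivAt.div ((hsderiv x).const_add 1)
        (((hasDerivAt_id x).const_sub 1)) h1x
    have hB : HasDerivAt (fun y => Real.log ((1 + s y) / 2))
        ((s' x / 2) / ((1 + s x) / 2)) x := by
      have h2 : HasDerivAt (fun y => (1 + s y) / 2) (s' x / 2) x :=
        ((hsderiv x).const_add 1).div_const 2
      exact h2.log (by positivity)
    exact hA.mul hB
  have hderiv_neg : ∀ x : ℝ, 0 < x → x < 1 → deriv g x < 0 := by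
    intro x hx0 hx1
    have h1x : (0 : ℝ) < 1 - x := by linarith
    have hsx0 := hspos x hx0.le
    have hsx1 := hsub x hx0 hx1
    have hD := (hgderiv x hx0 hx1).deriv
    rw [hD]
    set u : ℝ := (1 + s x) / 2 with hu_def
    have hu0 : (1 : ℝ) / 2 < u := by rw [hu_def]; linarith
    have hu1 : u < 1 := by rw [hu_def]; linarith
    have hL1 : Real.log u < u - 1 :=
      Real.log_lt_sub_one_of_pos (by linarith) (ne_of_lt hu1)
    have hL2 : -1 < Real.log u := by
      have : Real.log (1/2) < Real.log u := Real.log_lt_log (by norm_num) hu0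
      have h2 : Real.log (1/2) = -Real.log 2 := by
        rw [Real.log_div one_ne_zero two_ne_zero, Real.log_one]; ring
      have := Real.log_two_lt_d9
      linarith
    have hP0 : 0 ≤ s' x * (1 - x) := mul_nonneg (hs'nonneg x hx0.le) h1x.le
    have hP1 : s' x * (1 - x) ≤ 1 - s x := hconv x hx0 hx1
    have hLneg : Real.log u < 0 := by linarith
    -- rewrite goal as N / (1-x)^2 with N < 0
    have hsimp : (s' x * (1 - x) - (1 + s x) * (-1)) / (1 - x) ^ 2 * Real.log u
        + (1 + s x) / (1 - x) * ((s' x / 2) / ((1 + s x) / 2))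
        = ((s' x * (1 - x) + 2 * u) * Real.log u + s' x * (1 - x)) / (1 - x) ^ 2 := by
      rw [hu_def]
      field_simp
      ring
    rw [hsimp]
    apply div_neg_of_neg_of_pos _ (by positivity)
    have h1s : 1 - s x = 2 - 2 * u := by rw [hu_def]; ring
    rw [h1s] at hP1
    nlinarith [hP0, hP1, hL1, hL2, hLneg, hu1]
  -- strict antitonicity on [β, α]
  have hsub' : Set.Icc β α ⊆ Set.Ioo 0 1 := fun x hx => ⟨lt_of_lt_of_le hβ hx.1, lt_of_le_of_lt hx.2 hα⟩
  have hanti : StrictAntiOn g (Set.Icc β α) := by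
    apply strictAntiOn_of_deriv_neg (convex_Icc β α)
    · apply ContinuousOn.mul
      · apply ContinuousOn.div
        · exact (continuousOn_const.add (by fun_prop))
        · fun_prop
        · intro x hx
          have := (hsub' hx).2; linarith
      · apply ContinuousOn.log
        · fun_prop
        · intro x hx
          have := hspos x (le_of_lt (hsub' hx).1)
          positivity
    · intro x hx
      rw [interior_Icc] at hx
      have hx' := hsub' ⟨hx.1.le, hx.2.le⟩
      exact hderiv_neg x hx'.1 hx'.2
  have := hanti (Set.left_mem_Icc.2 hβα.le) (Set.right_mem_Icc.2 hβα.le) hβα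
  simpa [hg_def] using this
end

section
/- Let d be a positive integer and let w_0, w_1, …, w_d be nonnegative reals with Σ_{i=0}^{d} w_i = 1 and 0 < w_0 < 1. Define s(x) = Σ_{i=0}^{d} w_i x^i. Then the function g(x) = ((1 + s(x))/(1 - x)) · log((1 + s(x))/2) is strictly decreasing on the interval (0,1). -/
lemma aux_pow (n : ℕ) (x : ℝ) (hx0 : 0 ≤ x) (hx1 : x ≤ 1) :
    (n : ℝ) * x ^ (n - 1) * (1 - x) ≤ 1 - x ^ n := by
  have h1 : 1 - x ^ n = (∑ j ∈ Finset.range n, x ^ j) * (1 - x) := by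
    linear_combination geom_sum_mul x n
  rw [h1]
  apply mul_le_mul_of_nonneg_right _ (by linarith)
  calc (n : ℝ) * x ^ (n - 1) = ∑ _j ∈ Finset.range n, x ^ (n - 1) := by
        simp [Finset.sum_const, mul_comm]
    _ ≤ ∑ j ∈ Finset.range n, x ^ j :=
        Finset.sum_le_sum fun j hj =>
          pow_le_pow_of_le_one hx0 hx1 (by have := Finset.mem_range.mp hj; omega)

/-- for nonnegative weights summing to 1 with `0 < w_0 < 1`, letting
`s(x) = ∑_{i=0}^d w_i x^i`, the function `g(x) = ((1 + s(x))/(1 - x)) log((1 + s(x))/2)`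
is strictly decreasing on `(0, 1)`. -/
theorem g_strict_anti (d : ℕ) (hd : 0 < d)
    (w : Fin (d + 1) → ℝ) (hw : ∀ i, 0 ≤ w i) (hsum : ∑ i, w i = 1)
    (hw0pos : 0 < w 0) (hw0lt : w 0 < 1) :
    StrictAntiOn (fun x : ℝ =>
        ((1 + ∑ i, w i * x ^ (i : ℕ)) / (1 - x)) *
          Real.log ((1 + ∑ i, w i * x ^ (i : ℕ)) / 2))
      (Set.Ioo 0 1) := by
  set S : ℝ → ℝ := fun x => ∑ i, w i * x ^ (i : ℕ) with hSdef
  set S' : ℝ → ℝ := fun x => ∑ i, w i * ((i : ℕ) * x ^ ((i : ℕ) - 1)) with hS'def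
  -- a witness index with positive weight and positive exponent
  obtain ⟨j, hj0, hjpos⟩ : ∃ j : Fin (d + 1), j ≠ 0 ∧ 0 < w j := by
    by_contra h
    push_neg at h
    have : ∑ i, w i = w 0 := by
      apply Finset.sum_eq_single
      · intro i _ hi
        have := h i hi
        linarith [hw i]
      · simp
    rw [hsum] at this
    linarith
  -- basic facts about S on (0,1)
  have hSpos : ∀ x ∈ Set.Ioo (0:ℝ) 1, 0 < S x := by
    intro x hx
    have : w 0 * x ^ ((0 : Fin (d+1)) : ℕ) ≤ S x := by
      apply Finset.single_le_sum (f := fun i : Fin (d+1) => w i * x ^ (i : ℕ))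
      · intro i _
        exact mul_nonneg (hw i) (pow_nonneg hx.1.le _)
      · simp
    simpa using lt_of_lt_of_le (by simpa using hw0pos) this
  have hSlt1 : ∀ x ∈ Set.Ioo (0:ℝ) 1, S x < 1 := by
    intro x hx
    have : S x < ∑ i, w i := by
      apply Finset.sum_lt_sum
      · intro i _
        have : x ^ (i : ℕ) ≤ 1 := pow_le_one₀ hx.1.le hx.2.le
        nlinarith [hw i]
      · refine ⟨j, Finset.mem_univ j, ?_⟩
        have hxj : x ^ (j : ℕ) < 1 := pow_lt_one₀ hx.1.le hx.2 (Fin.val_ne_zero_iff.mpr hj0)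
        nlinarith
    linarith [this.trans_eq hsum]
  have hS'nonneg : ∀ x ∈ Set.Ioo (0:ℝ) 1, 0 ≤ S' x := by
    intro x hx
    apply Finset.sum_nonneg
    intro i _
    exact mul_nonneg (hw i) (mul_nonneg (by positivity) (pow_nonneg hx.1.le _))
  have hkey : ∀ x ∈ Set.Ioo (0:ℝ) 1, S' x * (1 - x) ≤ 1 - S x := by
    intro x hx
    have h1 : S' x * (1 - x) = ∑ i, w i * ((i : ℕ) * x ^ ((i : ℕ) - 1) * (1 - x)) := by
      rw [hS'def, Finset.sum_mul]
      congr 1; ext i; ring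
    have h2 : (1 : ℝ) - S x = ∑ i, w i * (1 - x ^ (i : ℕ)) := by
      simp only [mul_sub, Finset.sum_sub_distrib, mul_one]
      rw [hsum, hSdef]
    rw [h1, h2]
    apply Finset.sum_le_sum
    intro i _
    exact mul_le_mul_of_nonneg_left (aux_pow (i : ℕ) x hx.1.le hx.2.le) (hw i)
  -- differentiability
  have hSderiv : ∀ x : ℝ, HasDerivAt S (S' x) x := by
    intro x
    apply HasDerivAt.fun_sum
    intro i _
    exact (hasDerivAt_pow (i : ℕ) x).const_mul (w i)
  have hScont : Continuous fun x : ℝ => 1 + S x := by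
    apply continuous_const.add
    exact continuous_finset_sum _ fun i _ => continuous_const.mul (continuous_pow _)
  apply strictAntiOn_of_deriv_neg (convex_Ioo 0 1)
  · apply ContinuousOn.mul
    · apply ContinuousOn.div hScont.continuousOn
      · exact (continuous_const.sub continuous_id).continuousOn
      · intro x hx; have := hx.2; simp only [Set.mem_Ioo] at hx; linarith [hx.2]
    · apply ContinuousOn.log ((hScont.div_const 2).continuousOn)
      intro x hx
      have := hSpos x hx
      positivity
  · rw [interior_Ioo]
    intro x hx
    have hx0 := hx.1
    have hx1 := hx.2
    have h1x : (0:ℝ) < 1 - x := by linarith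
    have ha0 := hSpos x hx
    have ha1 := hSlt1 x hx
    have hb := hS'nonneg x hx
    have hk := hkey x hx
    have hA : (0:ℝ) < 1 + S x := by linarith
    have hAne : (1 + S x) / 2 ≠ 0 := by positivity
    have hderiv : HasDerivAt (fun x : ℝ =>
        ((1 + ∑ i, w i * x ^ (i : ℕ)) / (1 - x)) *
          Real.log ((1 + ∑ i, w i * x ^ (i : ℕ)) / 2))
        ((S' x * (1 - x) - (1 + S x) * (-1)) / (1 - x) ^ 2 *
            Real.log ((1 + S x) / 2) +
          (1 + S x) / (1 - x) * (S' x / 2 / ((1 + S x) / 2))) x := by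
      have h1 : HasDerivAt (fun y : ℝ => 1 + S y) (S' x) x :=
        (hSderiv x).const_add 1
      have h2 : HasDerivAt (fun y : ℝ => 1 - y) (-1) x := by
        simpa using (hasDerivAt_id x).const_sub 1
      have hq := h1.div h2 (by linarith)
      have hl := ((h1.div_const 2).log hAne)
      exact hq.mul hl
    rw [hderiv.deriv]
    -- now the sign computation
    set a := S x
    set b := S' x
    have hL : Real.log ((1 + a) / 2) < (a - 1) / 2 := by
      have := Real.log_lt_sub_one_of_pos (x := (1 + a) / 2) (by positivity)
        (by intro h; rw [div_eq_one_iff_eq (by norm_num)] at h; linarith)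
      linarith
    have hDeq : (b * (1 - x) - (1 + a) * (-1)) / (1 - x) ^ 2 *
            Real.log ((1 + a) / 2) +
          (1 + a) / (1 - x) * (b / 2 / ((1 + a) / 2)) =
        ((b * (1 - x) + 1 + a) * Real.log ((1 + a) / 2) + b * (1 - x)) / (1 - x) ^ 2 := by
      field_simp
      ring
    rw [hDeq]
    apply div_neg_of_neg_of_pos _ (by positivity)
    have hcpos : (0:ℝ) < b * (1 - x) + 1 + a := by nlinarith
    have t1 : (b * (1 - x) + 1 + a) * Real.log ((1 + a) / 2) <
        (b * (1 - x) + 1 + a) * ((a - 1) / 2) :=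
      mul_lt_mul_of_pos_left hL hcpos
    have t2 : b * (1 - x) * (1 + a) ≤ (1 - a) * (1 + a) :=
      mul_le_mul_of_nonneg_right hk (by linarith)
    nlinarith [t1, t2]
end

section
/- Let 0 < β < α < 1 and γ ≥ 1. Let (w_1,κ_1), …, (w_n,κ_n) be finitely many pairs of reals with each w_j ≥ 0, Σ_{j=1}^{n} w_j = 1, and each κ_j ≥ 1, and define s(x) = Σ_{j=1}^{n} w_j x^{κ_j} for x > 0. If s(β) = β^γ, then s(α) ≤ α^γ. -/
/-- let `0 < β < α < 1`, `γ ≥ 1`, and let `s(x) = ∑_j w_j x^{κ_j}` be a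
convex combination of power functions with exponents `κ_j ≥ 1`. If `s(β) = β^γ` then
`s(α) ≤ α^γ`. -/
theorem convex_combination_power_bound (α β γ : ℝ)
    (hβ : 0 < β) (hβα : β < α) (hα : α < 1) (hγ : 1 ≤ γ)
    (n : ℕ) (w κ : Fin n → ℝ) (hw : ∀ j, 0 ≤ w j) (hsum : ∑ j, w j = 1)
    (hκ : ∀ j, 1 ≤ κ j)
    (hβeq : ∑ j, w j * β ^ (κ j) = β ^ γ) :
    ∑ j, w j * α ^ (κ j) ≤ α ^ γ := by
  have hα0 : 0 < α := lt_trans hβ hβα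
  have hβ1 : β < 1 := lt_trans hβα hα
  set t : ℝ := Real.log α / Real.log β with ht_def
  have hlogβ : Real.log β < 0 := Real.log_neg hβ hβ1
  have hlogα : Real.log α < 0 := Real.log_neg hα0 hα
  have hlt : Real.log β < Real.log α := Real.log_lt_log hβ hβα
  have ht0 : 0 < t := div_pos_of_neg_of_neg hlogα hlogβ
  have ht1 : t < 1 := by
    rw [div_lt_one_of_neg hlogβ]; exact hlt
  have hαβ : α = β ^ t := by
    rw [Real.rpow_def_of_pos hβ, ht_def, mul_comm, div_mul_cancel₀ _ (ne_of_lt hlogβ),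
      Real.exp_log hα0]
  have key : ∀ j, α ^ (κ j) = (β ^ (κ j)) ^ t := by
    intro j
    rw [hαβ, ← Real.rpow_mul hβ.le, ← Real.rpow_mul hβ.le, mul_comm]
  have jensen : ∑ j, w j * (β ^ (κ j)) ^ t ≤ (∑ j, w j * β ^ (κ j)) ^ t := by
    have hc := Real.concaveOn_rpow ht0.le ht1.le
    have := hc.le_map_sum (t := Finset.univ) (w := w) (p := fun j => β ^ (κ j))
      (fun i _ => hw i) hsum (fun i _ => Set.mem_Ici.2 (Real.rpow_nonneg hβ.le _))
    simpa using this
  calc ∑ j, w j * α ^ (κ j) = ∑ j, w j * (β ^ (κ j)) ^ t := by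
        simp_rw [key]
    _ ≤ (∑ j, w j * β ^ (κ j)) ^ t := jensen
    _ = (β ^ γ) ^ t := by rw [hβeq]
    _ = α ^ γ := by
        rw [hαβ, ← Real.rpow_mul hβ.le, ← Real.rpow_mul hβ.le, mul_comm]
end

section
/- Let γ_0, γ, γ_1 be reals with γ_0 < γ < γ_1. Then the function φ(x) = (x^{γ_0} - x^{γ}) / (x^{γ} - x^{γ_1}) is strictly decreasing on the interval (0,1). -/
private lemma aux_lemA (p q : ℝ) (hp : 0 < p) (hq : 0 < q) {y : ℝ}
    (hy0 : 0 < y) (hy1 : y < 1) :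
    (p + q) * y ^ q - q * y ^ (p + q) < p := by
  set G : ℝ → ℝ := fun t => (p - (p + q) * t ^ q) + q * t ^ (p + q) with hGdef
  have hder : ∀ t ∈ Set.Ioo y 1,
      HasDerivAt G ((q * (p + q)) * (t ^ (p + q - 1) - t ^ (q - 1))) t := by
    intro t ht
    have ht0 : (0:ℝ) < t := hy0.trans ht.1
    have h1 : HasDerivAt (fun s : ℝ => s ^ q) (q * t ^ (q - 1)) t :=
      Real.hasDerivAt_rpow_const (Or.inl ht0.ne')
    have h2 : HasDerivAt (fun s : ℝ => s ^ (p + q)) ((p + q) * t ^ (p + q - 1)) t :=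
      Real.hasDerivAt_rpow_const (Or.inl ht0.ne')
    have h3 := ((h1.const_mul (p + q)).const_sub p).add (h2.const_mul q)
    refine h3.congr_deriv ?_
    ring
  have hcont : ContinuousOn G (Set.Icc y 1) := by
    have hcq : ContinuousOn (fun s : ℝ => s ^ q) (Set.Icc y 1) :=
      ContinuousOn.rpow_const continuousOn_id
        (fun t ht => Or.inl (ne_of_gt (lt_of_lt_of_le hy0 ht.1)))
    have hcpq : ContinuousOn (fun s : ℝ => s ^ (p + q)) (Set.Icc y 1) :=
      ContinuousOn.rpow_const continuousOn_id
        (fun t ht => Or.inl (ne_of_gt (lt_of_lt_of_le hy0 ht.1)))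
    exact (continuousOn_const.sub (continuousOn_const.mul hcq)).add
      (continuousOn_const.mul hcpq)
  have hanti : StrictAntiOn G (Set.Icc y 1) := by
    apply strictAntiOn_of_deriv_neg (convex_Icc y 1) hcont
    intro t ht
    rw [interior_Icc] at ht
    have ht0 : (0:ℝ) < t := hy0.trans ht.1
    rw [(hder t ht).deriv]
    have hlt : t ^ (p + q - 1) < t ^ (q - 1) :=
      Real.rpow_lt_rpow_of_exponent_gt ht0 ht.2 (by linarith)
    have : 0 < q * (p + q) := by positivity
    nlinarith
  have hkey : G 1 < G y := hanti (Set.mem_Icc.mpr ⟨le_refl y, le_of_lt hy1⟩)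
    (Set.mem_Icc.mpr ⟨le_of_lt hy1, le_refl 1⟩) hy1
  have hG1 : G 1 = 0 := by simp [hGdef]
  have hGy : G y = (p - (p + q) * y ^ q) + q * y ^ (p + q) := rfl
  rw [hG1, hGy] at hkey
  linarith

private lemma aux_lemB (p q : ℝ) (hp : 0 < p) (hq : 0 < q) {x y : ℝ}
    (hx0 : 0 < x) (hxy : x < y) (hy1 : y < 1) :
    (1 - y ^ p) * (1 - x ^ (p + q)) < (1 - x ^ p) * (1 - y ^ (p + q)) := by
  have hy0 : (0:ℝ) < y := hx0.trans hxy
  set F : ℝ → ℝ :=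
    fun t => (1 - t ^ p) * (1 - y ^ (p + q)) - (1 - y ^ p) * (1 - t ^ (p + q)) with hFdef
  have hder : ∀ t ∈ Set.Ioo x y,
      HasDerivAt F
        (-(p * t ^ (p - 1)) * (1 - y ^ (p + q)) +
          (1 - y ^ p) * ((p + q) * t ^ (p + q - 1))) t := by
    intro t ht
    have ht0 : (0:ℝ) < t := hx0.trans ht.1
    have h1 : HasDerivAt (fun s : ℝ => s ^ p) (p * t ^ (p - 1)) t :=
      Real.hasDerivAt_rpow_const (Or.inl ht0.ne')
    have h2 : HasDerivAt (fun s : ℝ => s ^ (p + q)) ((p + q) * t ^ (p + q - 1)) t :=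
      Real.hasDerivAt_rpow_const (Or.inl ht0.ne')
    have h3 := ((h1.const_sub 1).mul_const (1 - y ^ (p + q))).sub
      ((h2.const_sub 1).const_mul (1 - y ^ p))
    refine h3.congr_deriv ?_
    ring
  have hcont : ContinuousOn F (Set.Icc x y) := by
    have hcp : ContinuousOn (fun s : ℝ => s ^ p) (Set.Icc x y) :=
      ContinuousOn.rpow_const continuousOn_id
        (fun t ht => Or.inl (ne_of_gt (lt_of_lt_of_le hx0 ht.1)))
    have hcpq : ContinuousOn (fun s : ℝ => s ^ (p + q)) (Set.Icc x y) :=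
      ContinuousOn.rpow_const continuousOn_id
        (fun t ht => Or.inl (ne_of_gt (lt_of_lt_of_le hx0 ht.1)))
    exact ((continuousOn_const.sub hcp).mul continuousOn_const).sub
      (continuousOn_const.mul (continuousOn_const.sub hcpq))
  have hanti : StrictAntiOn F (Set.Icc x y) := by
    apply strictAntiOn_of_deriv_neg (convex_Icc x y) hcont
    intro t ht
    rw [interior_Icc] at ht
    have ht0 : (0:ℝ) < t := hx0.trans ht.1
    rw [(hder t ht).deriv]
    -- key inequality: (1 - y^p)(p+q) t^q < p (1 - y^(p+q))
    have htq : t ^ q < y ^ q := Real.rpow_lt_rpow ht0.le ht.2 hq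
    have hyp1 : y ^ p < 1 := Real.rpow_lt_one hy0.le hy1 hp
    have hypq1 : y ^ (p + q) < 1 := Real.rpow_lt_one hy0.le hy1 (by positivity)
    have hA := aux_lemA p q hp hq hy0 hy1
    have hsplit : y ^ (p + q) = y ^ p * y ^ q := Real.rpow_add hy0 p q
    have hkey : (1 - y ^ p) * ((p + q) * t ^ q) < p * (1 - y ^ (p + q)) := by
      have h1 : (1 - y ^ p) * ((p + q) * t ^ q) < (1 - y ^ p) * ((p + q) * y ^ q) := by
        apply mul_lt_mul_of_pos_left _ (by linarith)
        exact mul_lt_mul_of_pos_left htq (by linarith)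
      have h2 : (1 - y ^ p) * ((p + q) * y ^ q) < p * (1 - y ^ (p + q)) := by
        rw [hsplit] at hA ⊢
        nlinarith
      linarith
    have htsplit : t ^ (p + q - 1) = t ^ (p - 1) * t ^ q := by
      rw [← Real.rpow_add ht0]; ring_nf
    have htp1 : 0 < t ^ (p - 1) := Real.rpow_pos_of_pos ht0 _
    rw [htsplit]
    nlinarith [mul_pos htp1 (sub_pos.mpr hkey)]
  have hkey : F y < F x := hanti (Set.mem_Icc.mpr ⟨le_refl x, le_of_lt hxy⟩)
    (Set.mem_Icc.mpr ⟨le_of_lt hxy, le_refl y⟩) hxy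
  have hFy : F y = 0 := by simp [hFdef]
  have hFx : F x = (1 - x ^ p) * (1 - y ^ (p + q)) - (1 - y ^ p) * (1 - x ^ (p + q)) := rfl
  rw [hFy, hFx] at hkey
  linarith

/-- for reals `γ₀ < γ < γ₁`, the function
`φ(x) = (x^{γ₀} - x^γ) / (x^γ - x^{γ₁})` is strictly decreasing on `(0, 1)`. -/
theorem phi_strict_anti (γ₀ γ γ₁ : ℝ) (h₀ : γ₀ < γ) (h₁ : γ < γ₁) :
    StrictAntiOn (fun x : ℝ => (x ^ γ₀ - x ^ γ) / (x ^ γ - x ^ γ₁)) (Set.Ioo 0 1) := by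
  intro x hx y hy hxy
  obtain ⟨hx0, hx1⟩ := hx
  obtain ⟨hy0, hy1⟩ := hy
  set p : ℝ := γ - γ₀ with hp
  set q : ℝ := γ₁ - γ with hq
  have hp0 : 0 < p := by simp [hp]; linarith
  have hq0 : 0 < q := by simp [hq]; linarith
  have hdx : 0 < x ^ γ - x ^ γ₁ :=
    sub_pos.mpr (Real.rpow_lt_rpow_of_exponent_gt hx0 hx1 h₁)
  have hdy : 0 < y ^ γ - y ^ γ₁ :=
    sub_pos.mpr (Real.rpow_lt_rpow_of_exponent_gt hy0 hy1 h₁)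
  simp only []
  rw [div_lt_div_iff₀ hdy hdx]
  have exγ : x ^ γ = x ^ γ₀ * x ^ p := by
    rw [← Real.rpow_add hx0]; congr 1; simp only [hp, hq]; ring
  have exγ₁ : x ^ γ₁ = x ^ γ₀ * x ^ (p + q) := by
    rw [← Real.rpow_add hx0]; congr 1; simp only [hp, hq]; ring
  have eyγ : y ^ γ = y ^ γ₀ * y ^ p := by
    rw [← Real.rpow_add hy0]; congr 1; simp only [hp, hq]; ring
  have eyγ₁ : y ^ γ₁ = y ^ γ₀ * y ^ (p + q) := by
    rw [← Real.rpow_add hy0]; congr 1; simp only [hp, hq]; ring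
  rw [exγ, exγ₁, eyγ, eyγ₁]
  have ha : 0 < x ^ γ₀ := Real.rpow_pos_of_pos hx0 _
  have hb : 0 < y ^ γ₀ := Real.rpow_pos_of_pos hy0 _
  have hB := aux_lemB p q hp0 hq0 hx0 hxy hy1
  nlinarith [mul_pos (mul_pos ha hb)
    (sub_pos.mpr hB)]
end

section
/- Let 0 < β < α < 1 and define ρ(γ) = log((1 + α^γ)/2) / log((1 + β^γ)/2) for γ ≥ 1. Then ρ'(γ) > 0 for all γ ≥ 1; in particular ρ is strictly increasing on [1,∞). -/
open Real

lemma rho_aux_log_cubic {x : ℝ} (hx : 0 < x) (hx1 : x ≤ 1) :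
    Real.log x ≤ -((1-x) + (1-x)^2/2 + (1-x)^3/3) := by
  set G : ℝ → ℝ := fun t => Real.log t + ((1-t) + (1-t)^2/2 + (1-t)^3/3) with hGdef
  have hder : ∀ t : ℝ, 0 < t → HasDerivAt G (t⁻¹ + (-1 + (2*(1-t)^1*(-1))/2 + (3*(1-t)^2*(-1))/3)) t := by
    intro t ht
    have h1 : HasDerivAt (fun s : ℝ => 1 - s) (-1) t := (hasDerivAt_id t).const_sub 1
    exact (Real.hasDerivAt_log ht.ne').add
      ((h1.add ((h1.pow 2).div_const 2)).add ((h1.pow 3).div_const 3))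
  have hmono : MonotoneOn G (Set.Icc x 1) := by
    apply monotoneOn_of_deriv_nonneg (convex_Icc x 1)
    · apply ContinuousOn.add
      · exact Real.continuousOn_log.mono (by intro t ht; simp; intro h; nlinarith [ht.1])
      · fun_prop
    · intro t ht
      rw [interior_Icc] at ht
      exact ((hder t (lt_of_lt_of_le hx ht.1.le)).differentiableAt).differentiableWithinAt
    · intro t ht
      rw [interior_Icc] at ht
      have ht0 : 0 < t := lt_of_lt_of_le hx ht.1.le
      rw [(hder t ht0).deriv]
      have key : t⁻¹ + (-1 + (2*(1-t)^1*(-1))/2 + (3*(1-t)^2*(-1))/3) = (1-t)^3 / t := by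
        field_simp
        ring
      rw [key]
      exact div_nonneg (by nlinarith [ht.2.le]) ht0.le
  have h01 : G x ≤ G 1 := hmono (by constructor <;> linarith) (by constructor <;> linarith) hx1
  have : G 1 = 0 := by simp [hGdef]
  rw [this] at h01
  simp only [hGdef] at h01
  linarith

lemma rho_aux_F_pos {x : ℝ} (hx : 0 < x) (hx1 : x < 1) :
    0 < Real.log ((1+x)/2) * (1 + x + Real.log x) - x * Real.log x := by
  set L : ℝ := Real.log ((1+x)/2) with hL
  set lx : ℝ := Real.log x with hlx
  have hLneg : L < 0 := Real.log_neg (by linarith) (by linarith)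
  have hlxneg : lx < 0 := Real.log_neg hx hx1
  have hcub : lx ≤ -((1-x) + (1-x)^2/2 + (1-x)^3/3) := rho_aux_log_cubic hx hx1.le
  -- lower bound for L : L ≥ (x-1)/(1+x), i.e. (1+x)*L ≥ x-1
  have hLlow : (1+x) * L ≥ x - 1 := by
    have h2 : Real.log (2/(1+x)) ≤ 2/(1+x) - 1 := Real.log_le_sub_one_of_pos (by positivity)
    have hLL : L = - Real.log (2/(1+x)) := by
      rw [hL, ← Real.log_inv, inv_div]
    have h1x : (0:ℝ) < 1 + x := by linarith
    rw [hLL]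
    have := mul_le_mul_of_nonneg_left h2 h1x.le
    have hme : (1+x) * (2/(1+x) - 1) = 1 - x := by field_simp; ring
    nlinarith
  by_cases hA : 1 + x + lx ≤ 0
  · nlinarith [mul_nonneg (neg_nonneg.mpr hLneg.le) (neg_nonneg.mpr hA)]
  · push_neg at hA
    have h1x : (0:ℝ) < 1 + x := by linarith
    -- (1+x)*(L*(1+x+lx) - x*lx) ≥ (x-1)*(1+x+lx) - (1+x)*x*lx > 0
    have step1 : (1+x) * (L * (1+x+lx)) ≥ (x-1) * (1+x+lx) :=
      by nlinarith [mul_le_mul_of_nonneg_right hLlow.le hA.le]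
    have hB : 1 + x + lx ≤ 2*x - (1-x)^2/2 - (1-x)^3/3 := by nlinarith [hcub]
    have t1 : (x-1)*(2*x - (1-x)^2/2 - (1-x)^3/3) ≤ (x-1)*(1+x+lx) :=
      mul_le_mul_of_nonpos_left hB (by linarith)
    have t2 : x*lx ≤ x*(-((1-x) + (1-x)^2/2 + (1-x)^3/3)) :=
      mul_le_mul_of_nonneg_left hcub hx.le
    have hpoly : 0 < (x-1)*(2*x - (1-x)^2/2 - (1-x)^3/3)
        + (1+x)*(x*((1-x) + (1-x)^2/2 + (1-x)^3/3)) := by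
      nlinarith [pow_pos (sub_pos.mpr hx1) 3, pow_pos (sub_pos.mpr hx1) 4,
        pow_pos (sub_pos.mpr hx1) 5, sub_pos.mpr hx1]
    have step2 : (x-1) * (1+x+lx) - (1+x)*(x*lx) > 0 := by nlinarith [t1, t2, hpoly, h1x]
    nlinarith [mul_pos h1x (sub_pos.mpr (show x*lx < L*(1+x+lx) by nlinarith))]

noncomputable def rho_aux_Phi : ℝ → ℝ := fun x => x * Real.log x / ((1+x) * Real.log ((1+x)/2))

lemma rho_aux_phi_deriv {x : ℝ} (hx : 0 < x) (hx1 : x < 1) :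
    HasDerivAt rho_aux_Phi
      (((Real.log x + 1) * ((1+x) * Real.log ((1+x)/2)) -
        x * Real.log x * (Real.log ((1+x)/2) + 1)) / ((1+x) * Real.log ((1+x)/2))^2) x := by
  have h1x : (0:ℝ) < 1 + x := by linarith
  have hLneg : Real.log ((1+x)/2) < 0 := Real.log_neg (by linarith) (by linarith)
  have hN : HasDerivAt (fun t : ℝ => t * Real.log t) (Real.log x + 1) x := by
    have := (hasDerivAt_id x).fun_mul (Real.hasDerivAt_log hx.ne')
    refine this.congr_deriv ?_
    simp only [id_eq]
    field_simp
  have hinner : HasDerivAt (fun t : ℝ => (1+t)/2) (1/2) x :=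
    ((hasDerivAt_id x).const_add 1).div_const 2
  have hlog : HasDerivAt (fun t : ℝ => Real.log ((1+t)/2)) (((1+x)/2)⁻¹ * (1/2)) x :=
    (Real.hasDerivAt_log (by positivity)).comp x hinner
  have hD : HasDerivAt (fun t : ℝ => (1+t) * Real.log ((1+t)/2))
      (Real.log ((1+x)/2) + 1) x := by
    have := ((hasDerivAt_id x).const_add 1).fun_mul hlog
    refine this.congr_deriv ?_
    simp only [id_eq]
    field_simp
  have hDne : (1+x) * Real.log ((1+x)/2) ≠ 0 := by
    exact mul_ne_zero h1x.ne' hLneg.ne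
  exact hN.div hD hDne

lemma rho_aux_phi_mono : StrictMonoOn rho_aux_Phi (Set.Ioo (0:ℝ) 1) := by
  apply strictMonoOn_of_deriv_pos (convex_Ioo 0 1)
  · intro x hxm
    exact (rho_aux_phi_deriv hxm.1 hxm.2).differentiableAt.continuousAt.continuousWithinAt
  · intro x hxm
    rw [interior_Ioo] at hxm
    obtain ⟨hx, hx1⟩ := hxm
    rw [(rho_aux_phi_deriv hx hx1).deriv]
    have h1x : (0:ℝ) < 1 + x := by linarith
    have hLneg : Real.log ((1+x)/2) < 0 := Real.log_neg (by linarith) (by linarith)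
    apply div_pos
    · have := rho_aux_F_pos hx hx1
      nlinarith [this]
    · exact pow_two_pos_of_ne_zero (mul_ne_zero h1x.ne' hLneg.ne)



/-- for `0 < β < α < 1` and
`ρ(γ) = log((1 + α^γ)/2) / log((1 + β^γ)/2)`, the derivative `ρ'(γ)` is positive for
all `γ ≥ 1`; in particular `ρ` is strictly increasing on `[1, ∞)`. -/
theorem rho_deriv_pos (α β : ℝ) (hβ : 0 < β) (hβα : β < α) (hα : α < 1) :
    (∀ γ : ℝ, 1 ≤ γ →
      0 < deriv (fun t : ℝ => Real.log ((1 + α ^ t) / 2) / Real.log ((1 + β ^ t) / 2)) γ) ∧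
    StrictMonoOn (fun t : ℝ => Real.log ((1 + α ^ t) / 2) / Real.log ((1 + β ^ t) / 2))
      (Set.Ici 1) := by
  have hα0 : (0:ℝ) < α := hβ.trans hβα
  have hbase : ∀ (c γ : ℝ), 0 < c →
      HasDerivAt (fun t : ℝ => Real.log ((1 + c ^ t)/2))
        (((1 + c^γ)/2)⁻¹ * ((c^γ * Real.log c)/2)) γ := by
    intro c γ hc
    have h1 : HasDerivAt (fun t : ℝ => c ^ t) (c^γ * Real.log c) γ :=
      (Real.hasStrictDerivAt_const_rpow hc γ).hasDerivAt
    have h2 : HasDerivAt (fun t : ℝ => (1 + c ^ t)/2) ((c^γ * Real.log c)/2) γ :=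
      (h1.const_add 1).div_const 2
    have hcp := Real.rpow_pos_of_pos hc γ
    have hpos : (0:ℝ) < (1 + c^γ)/2 := by linarith
    exact (Real.hasDerivAt_log hpos.ne').comp γ h2
  have main : ∀ γ : ℝ, 1 ≤ γ → ∃ d : ℝ,
      HasDerivAt (fun t : ℝ => Real.log ((1 + α ^ t) / 2) / Real.log ((1 + β ^ t) / 2)) d γ
      ∧ 0 < d := by
    intro γ hγ
    have hγ0 : (0:ℝ) < γ := by linarith
    have hx0 : 0 < α ^ γ := Real.rpow_pos_of_pos hα0 γ
    have hy0 : 0 < β ^ γ := Real.rpow_pos_of_pos hβ γ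
    have hx1 : α ^ γ < 1 := Real.rpow_lt_one hα0.le hα hγ0
    have hy1 : β ^ γ < 1 := Real.rpow_lt_one hβ.le (hβα.trans hα) hγ0
    have hyx : β ^ γ < α ^ γ := Real.rpow_lt_rpow hβ.le hβα hγ0
    set x := α ^ γ with hxdef
    set y := β ^ γ with hydef
    set Lx := Real.log ((1+x)/2) with hLx
    set Ly := Real.log ((1+y)/2) with hLy
    have hLxneg : Lx < 0 := Real.log_neg (by linarith) (by linarith)
    have hLyneg : Ly < 0 := Real.log_neg (by linarith) (by linarith)
    have h1x : (0:ℝ) < 1 + x := by linarith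
    have h1y : (0:ℝ) < 1 + y := by linarith
    have hf := hbase α γ hα0
    have hg := hbase β γ hβ
    have hd : HasDerivAt (fun t : ℝ => Real.log ((1 + α ^ t) / 2) / Real.log ((1 + β ^ t) / 2))
        ((((1 + x)/2)⁻¹ * ((x * Real.log α)/2) * Ly -
          Lx * (((1 + y)/2)⁻¹ * ((y * Real.log β)/2))) / Ly^2) γ :=
      hf.div hg hLyneg.ne
    refine ⟨_, hd, ?_⟩
    apply div_pos
    · -- numerator positive
      have hphi : rho_aux_Phi y < rho_aux_Phi x := rho_aux_phi_mono ⟨hy0, hy1⟩ ⟨hx0, hx1⟩ hyx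
      have hDx : (1+x) * Lx < 0 := mul_neg_of_pos_of_neg h1x hLxneg
      have hDy : (1+y) * Ly < 0 := mul_neg_of_pos_of_neg h1y hLyneg
      have h := mul_lt_mul_of_pos_right hphi (mul_pos_of_neg_of_neg hDx hDy)
      have hry : rho_aux_Phi y = y * Real.log y / ((1+y) * Ly) := by rw [hLy]; rfl
      have hrx : rho_aux_Phi x = x * Real.log x / ((1+x) * Lx) := by rw [hLx]; rfl
      rw [hry, hrx] at h
      have hnex : (1+x) * Lx ≠ 0 := hDx.ne
      have hney : (1+y) * Ly ≠ 0 := hDy.ne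
      have e1 : y * Real.log y / ((1+y) * Ly) * (((1+x)*Lx) * ((1+y)*Ly))
          = (y * Real.log y) * ((1+x)*Lx) := by
        rw [div_mul_eq_mul_div, div_eq_iff hney]
        ring
      have e2 : x * Real.log x / ((1+x) * Lx) * (((1+x)*Lx) * ((1+y)*Ly))
          = (x * Real.log x) * ((1+y)*Ly) := by
        rw [div_mul_eq_mul_div, div_eq_iff hnex]
        ring
      rw [e1, e2] at h
      rw [hxdef, hydef, Real.log_rpow hα0, Real.log_rpow hβ] at h
      have hnum : ((1 + x)/2)⁻¹ * ((x * Real.log α)/2) * Ly -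
          Lx * (((1 + y)/2)⁻¹ * ((y * Real.log β)/2))
          = ((x * Real.log α) * ((1+y)*Ly) - (y * Real.log β) * ((1+x)*Lx)) / ((1+x)*(1+y)) := by
        field_simp
      rw [hnum]
      apply div_pos
      · nlinarith [h, hγ0]
      · positivity
    · exact pow_two_pos_of_ne_zero hLyneg.ne
  constructor
  · intro γ hγ
    obtain ⟨d, hd, hdpos⟩ := main γ hγ
    rw [hd.deriv]
    exact hdpos
  · apply strictMonoOn_of_deriv_pos (convex_Ici 1)
    · intro γ hγ
      obtain ⟨d, hd, _⟩ := main γ hγ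
      exact hd.differentiableAt.continuousAt.continuousWithinAt
    · intro γ hγ
      rw [interior_Ici] at hγ
      obtain ⟨d, hd, hdpos⟩ := main γ hγ.le
      rw [hd.deriv]
      exact hdpos
end

section
/- Let γ ≥ 1. Then the function g(x) = ((1 + x^γ)/(x^γ · log x)) · log((1 + x^γ)/2) is strictly decreasing on the interval (0,1). -/
private lemma hD_ne (t : ℝ) (ht : t ∈ Set.Ioo (0:ℝ) 1) : t * Real.log t ≠ 0 := by
  have := Real.log_neg ht.1 ht.2
  exact mul_ne_zero (ne_of_gt ht.1) (ne_of_lt this)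

private lemma hderiv (t : ℝ) (ht : t ∈ Set.Ioo (0:ℝ) 1) :
    HasDerivAt (fun s : ℝ => ((1 + s) * Real.log ((1 + s)/2)) / (s * Real.log s))
      (((Real.log ((1+t)/2) + 1) * (t * Real.log t) -
        ((1+t) * Real.log ((1+t)/2)) * (Real.log t + 1)) / (t * Real.log t)^2) t := by
  have ht0 : (0:ℝ) < t := ht.1
  have h1t : (0:ℝ) < (1+t)/2 := by linarith [ht.1]
  have h1t' : (1:ℝ) + t ≠ 0 := by linarith
  have hinner : HasDerivAt (fun s : ℝ => (1+s)/2) (1/2) t := by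
    simpa using ((hasDerivAt_id t).const_add 1).div_const 2
  have hlog2 : HasDerivAt (fun s : ℝ => Real.log ((1+s)/2)) (1/(1+t)) t := by
    have h := (Real.hasDerivAt_log (ne_of_gt h1t)).comp t hinner
    refine h.congr_deriv ?_
    field_simp
  have hN : HasDerivAt (fun s : ℝ => (1+s) * Real.log ((1+s)/2))
      (Real.log ((1+t)/2) + 1) t := by
    have h := ((hasDerivAt_id t).const_add 1).mul hlog2
    refine h.congr_deriv ?_
    field_simp
    simp only [id_eq]; ring
  have hD : HasDerivAt (fun s : ℝ => s * Real.log s) (Real.log t + 1) t := by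
    have h := (hasDerivAt_id t).mul (Real.hasDerivAt_log (ne_of_gt ht0))
    refine h.congr_deriv ?_
    field_simp
    simp only [id_eq]; ring
  exact hN.div hD (hD_ne t ht)

private lemma key_neg (t : ℝ) (ht : t ∈ Set.Ioo (0:ℝ) 1) :
    (Real.log ((1+t)/2) + 1) * (t * Real.log t) -
      ((1+t) * Real.log ((1+t)/2)) * (Real.log t + 1) < 0 := by
  obtain ⟨ht0, ht1⟩ := ht
  set L1 := Real.log t with hL1def
  set L2 := Real.log ((1+t)/2) with hL2def
  have hL1 : L1 < 0 := Real.log_neg ht0 ht1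
  have hL2 : L2 < 0 := Real.log_neg (by linarith) (by linarith)
  have hL1' : L1 < t - 1 := Real.log_lt_sub_one_of_pos ht0 (ne_of_lt ht1)
  have hs : Real.sqrt t ≤ (1+t)/2 := by
    nlinarith [Real.sq_sqrt ht0.le, Real.sqrt_nonneg t, sq_nonneg (1 - Real.sqrt t)]
  have hhalf : L1 / 2 ≤ L2 := by
    have h := Real.log_le_log (Real.sqrt_pos.2 ht0) hs
    rwa [Real.log_sqrt ht0.le] at h
  nlinarith [mul_pos (neg_pos.2 hL2) (show (0:ℝ) < t - 1 - L1 by linarith),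
             mul_nonneg ht0.le (show (0:ℝ) ≤ 2*L2 - L1 by linarith)]

private lemma h_anti : StrictAntiOn
    (fun t : ℝ => ((1+t) * Real.log ((1+t)/2)) / (t * Real.log t)) (Set.Ioo 0 1) := by
  apply strictAntiOn_of_deriv_neg (convex_Ioo 0 1)
  · intro t ht
    exact (hderiv t ht).differentiableAt.continuousAt.continuousWithinAt
  · intro t ht
    rw [interior_Ioo] at ht
    rw [(hderiv t ht).deriv]
    apply div_neg_of_neg_of_pos (key_neg t ht)
    have := hD_ne t ht
    positivity

/-- for `γ ≥ 1`, the function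
`g(x) = ((1 + x^γ)/(x^γ log x)) log((1 + x^γ)/2)` is strictly decreasing on `(0, 1)`. -/
theorem g_log_strict_anti (γ : ℝ) (hγ : 1 ≤ γ) :
    StrictAntiOn (fun x : ℝ =>
        ((1 + x ^ γ) / (x ^ γ * Real.log x)) * Real.log ((1 + x ^ γ) / 2))
      (Set.Ioo 0 1) := by
  have hγ0 : 0 < γ := lt_of_lt_of_le one_pos hγ
  intro x hx y hy hxy
  have hxγ : x ^ γ ∈ Set.Ioo (0:ℝ) 1 :=
    ⟨Real.rpow_pos_of_pos hx.1 γ, Real.rpow_lt_one hx.1.le hx.2 hγ0⟩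
  have hyγ : y ^ γ ∈ Set.Ioo (0:ℝ) 1 :=
    ⟨Real.rpow_pos_of_pos hy.1 γ, Real.rpow_lt_one hy.1.le hy.2 hγ0⟩
  have hlt : x ^ γ < y ^ γ := Real.rpow_lt_rpow hx.1.le hxy hγ0
  have hh := h_anti hxγ hyγ hlt
  have key : ∀ z ∈ Set.Ioo (0:ℝ) 1,
      ((1 + z ^ γ) / (z ^ γ * Real.log z)) * Real.log ((1 + z ^ γ) / 2)
        = γ * (((1 + z^γ) * Real.log ((1 + z^γ)/2)) / (z^γ * Real.log (z^γ))) := by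
    intro z hz
    rw [Real.log_rpow hz.1]
    have hz0 : z ^ γ ≠ 0 := (Real.rpow_pos_of_pos hz.1 γ).ne'
    have hlz : Real.log z ≠ 0 := (Real.log_neg hz.1 hz.2).ne
    field_simp
  simp only []
  rw [key x hx, key y hy]
  exact mul_lt_mul_of_pos_left hh hγ0
end

section
/- For every x ∈ (0,1) and every γ ≥ 1, -(1 + x^γ + γ·log x)·log((1 + x^γ)/2) + γ·x^γ·log x < 0. -/
lemma key_aux (t : ℝ) (h0 : 0 < t) (h1 : t < 1) :
    -(1 + t + Real.log t) * Real.log ((1 + t) / 2) + t * Real.log t < 0 := by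
  set m := Real.log ((1 + t) / 2) with hm
  have hy0 : (0 : ℝ) < (1 + t) / 2 := by linarith
  have hmneg : m < 0 := Real.log_neg hy0 (by linarith)
  have hB : m < (t - 1) / 2 := by
    have := Real.log_lt_sub_one_of_pos hy0 (by intro h; nlinarith)
    linarith
  have hP : Real.log t ≤ 2 * m := by
    have h2 : Real.log (((1 + t) / 2) * ((1 + t) / 2)) = m + m :=
      Real.log_mul (ne_of_gt hy0) (ne_of_gt hy0)
    have hle : t ≤ ((1 + t) / 2) * ((1 + t) / 2) := by nlinarith [sq_nonneg (1 - t)]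
    have := Real.log_le_log h0 hle
    linarith [this, h2.symm ▸ this]
  have htm : 0 < t - m := by linarith
  nlinarith [mul_nonneg (le_of_lt htm) (by linarith : (0:ℝ) ≤ 2 * m - Real.log t),
    mul_pos (neg_pos.mpr hmneg) (by linarith : (0:ℝ) < (t - 1) / 2 - m)]

/-- for every `x ∈ (0,1)` and every `γ ≥ 1`,
`-(1 + x^γ + γ log x) log((1 + x^γ)/2) + γ x^γ log x < 0`. -/
theorem key_inequality (x γ : ℝ) (hx : x ∈ Set.Ioo (0 : ℝ) 1) (hγ : 1 ≤ γ) :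
    -(1 + x ^ γ + γ * Real.log x) * Real.log ((1 + x ^ γ) / 2) +
      γ * x ^ γ * Real.log x < 0 := by
  obtain ⟨hx0, hx1⟩ := hx
  have ht0 : 0 < x ^ γ := Real.rpow_pos_of_pos hx0 γ
  have ht1 : x ^ γ < 1 := Real.rpow_lt_one hx0.le hx1 (by linarith)
  have hlog : Real.log (x ^ γ) = γ * Real.log x := Real.log_rpow hx0 γ
  have h := key_aux (x ^ γ) ht0 ht1
  rw [hlog] at h
  linarith [h]
end

section
/- Let 0 ≤ β < α < 1 and γ ≥ 1. Then log(2/(1 + α^γ)) / log(2/(1 + β^γ)) ≥ log(2/(1+α)) / log(2/(1+β)), with equality if and only if γ = 1. -/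
open Real Set


noncomputable def Gf (u : ℝ) : ℝ := u + Real.log 2 - Real.log (Real.exp u + 1)

lemma hasDerivAt_Gf (u : ℝ) :
    HasDerivAt Gf (1 - Real.exp u / (Real.exp u + 1)) u := by
  have h0 : (0:ℝ) < Real.exp u + 1 := by positivity
  have h1 : HasDerivAt (fun u => Real.exp u + 1) (Real.exp u) u :=
    (Real.hasDerivAt_exp u).add_const 1
  have h2 : HasDerivAt (fun u => Real.log (Real.exp u + 1))
      (Real.exp u / (Real.exp u + 1)) u := by
    simpa [Function.comp_def, div_eq_inv_mul] using (Real.hasDerivAt_log (ne_of_gt h0)).comp u h1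
  exact ((hasDerivAt_id u).add_const (Real.log 2)).sub h2

lemma Gf_pos {u : ℝ} (hu : 0 < u) : 0 < Gf u := by
  have h1 : Real.exp u + 1 < 2 * Real.exp u := by
    have h := Real.one_lt_exp_iff.mpr hu
    nlinarith [Real.exp_pos u]
  have h2 : Real.log (Real.exp u + 1) < Real.log (2 * Real.exp u) :=
    Real.log_lt_log (by positivity) h1
  have h3 : Real.log (2 * Real.exp u) = Real.log 2 + u := by
    rw [Real.log_mul two_ne_zero (Real.exp_pos u).ne', Real.log_exp]
  simp only [Gf]; linarith

lemma sinh_key {u : ℝ} (hu : 0 < u) :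
    Real.exp u - Real.exp (-u) < u * (Real.exp u + Real.exp (-u)) := by
  have h : ∀ x : ℝ, 0 < x → Real.sinh x < x * Real.cosh x := by
    intro x hx
    have hmono : StrictMonoOn (fun y => y * Real.cosh y - Real.sinh y) (Ici 0) := by
      apply strictMonoOn_of_deriv_pos (convex_Ici 0)
      · fun_prop
      · intro y hy
        rw [interior_Ici] at hy
        have hd : HasDerivAt (fun y => y * Real.cosh y - Real.sinh y)
            (1 * Real.cosh y + y * Real.sinh y - Real.cosh y) y :=
          ((hasDerivAt_id y).mul (Real.hasDerivAt_cosh y)).sub (Real.hasDerivAt_sinh y)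
        rw [hd.deriv]
        have hs := Real.sinh_pos_iff.mpr (mem_Ioi.mp hy)
        nlinarith [mul_pos (mem_Ioi.mp hy) hs]
    have := hmono (mem_Ici.mpr le_rfl) (mem_Ici.mpr hx.le) hx
    simp at this
    linarith
  have := h u hu
  rw [Real.sinh_eq, Real.cosh_eq] at this
  linarith

noncomputable def Mf (u : ℝ) : ℝ := (Real.exp u + 1) * Gf u

lemma Gf_le {u : ℝ} (hu : 0 < u) :
    Gf u ≤ (Real.exp u - 1) / (Real.exp u + 1) := by
  have h0 : (0:ℝ) < Real.exp u + 1 := by positivity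
  have h1 : Gf u = Real.log (2 * Real.exp u / (Real.exp u + 1)) := by
    rw [Real.log_div (by positivity) (ne_of_gt h0),
      Real.log_mul two_ne_zero (Real.exp_pos u).ne', Real.log_exp, Gf]
    ring
  have h2 : Real.log (2 * Real.exp u / (Real.exp u + 1)) ≤
      2 * Real.exp u / (Real.exp u + 1) - 1 :=
    Real.log_le_sub_one_of_pos (by positivity)
  rw [h1]
  calc Real.log (2 * Real.exp u / (Real.exp u + 1)) ≤
      2 * Real.exp u / (Real.exp u + 1) - 1 := h2
    _ = (Real.exp u - 1) / (Real.exp u + 1) := by field_simp; ring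

lemma key_num {u : ℝ} (hu : 0 < u) :
    (Real.exp u + 1) * Gf u < u * (Real.exp u * Gf u + 1) := by
  have hG := Gf_pos hu
  have h0 : (0:ℝ) < Real.exp u + 1 := by positivity
  rcases le_or_gt (Real.exp u + 1 - u * Real.exp u) 0 with h | h
  · nlinarith
  · -- (e^u+1-u e^u) * G u < u, using G u ≤ (e^u-1)/(e^u+1)
    have hle := Gf_le hu
    have hkey : (Real.exp u + 1 - u * Real.exp u) * ((Real.exp u - 1) / (Real.exp u + 1)) < u := by
      rw [← mul_div_assoc, div_lt_iff₀ h0]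
      -- need (e^u+1-ue^u)(e^u-1) < u(e^u+1) ⟺ e^{2u}-1 < u(e^{2u}+1)
      have hs := sinh_key hu
      have he : Real.exp (-u) = (Real.exp u)⁻¹ := Real.exp_neg u
      have hp := Real.exp_pos u
      rw [he] at hs
      have hs2 : Real.exp u * Real.exp u - 1 < u * (Real.exp u * Real.exp u + 1) := by
        have := mul_lt_mul_of_pos_left hs hp
        field_simp at this
        nlinarith
      nlinarith
    have : (Real.exp u + 1 - u * Real.exp u) * Gf u ≤
        (Real.exp u + 1 - u * Real.exp u) * ((Real.exp u - 1) / (Real.exp u + 1)) :=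
      mul_le_mul_of_nonneg_left hle h.le
    nlinarith

lemma Mdiv_mono : StrictMonoOn (fun u => Mf u / u) (Ioi 0) := by
  apply strictMonoOn_of_deriv_pos (convex_Ioi 0)
  · apply ContinuousOn.div
    · apply Continuous.continuousOn
      unfold Mf Gf
      have hc : Continuous fun u : ℝ => Real.log (Real.exp u + 1) :=
        Real.continuous_exp.add continuous_const |>.log fun x => (by positivity : (0:ℝ) < Real.exp x + 1).ne'
      continuity
    · fun_prop
    · intro x hx; exact (mem_Ioi.mp hx).ne'
  · intro u hu
    rw [interior_Ioi] at hu
    have hu0 := mem_Ioi.mp hu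
    have hM : HasDerivAt Mf (Real.exp u * Gf u + 1) u := by
      have := ((Real.hasDerivAt_exp u).add_const 1).mul (hasDerivAt_Gf u)
      have h0 : (0:ℝ) < Real.exp u + 1 := by positivity
      refine this.congr_deriv ?_
      field_simp
      ring
    have hd : HasDerivAt (fun u => Mf u / u)
        (((Real.exp u * Gf u + 1) * u - Mf u * 1) / (u ^ 2)) u :=
      hM.div (hasDerivAt_id u) hu0.ne'
    rw [hd.deriv]
    have := key_num hu0
    have : Mf u < u * (Real.exp u * Gf u + 1) := by unfold Mf; linarith
    apply div_pos (by nlinarith) (by positivity)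

lemma Mf_pos {u : ℝ} (hu : 0 < u) : 0 < Mf u :=
  mul_pos (by positivity) (Gf_pos hu)

lemma prod_lt {a b γ : ℝ} (ha : 0 < a) (hab : a < b) (hγ : 1 < γ) :
    Gf a * Gf (γ * b) < Gf (γ * a) * Gf b := by
  have hγ0 : 0 < γ := lt_trans one_pos hγ
  set Φ : ℝ → ℝ := fun u => Real.log (Gf (γ * u)) - Real.log (Gf u) with hΦ
  have hderiv : ∀ u ∈ Ioi (0:ℝ), HasDerivAt Φ
      (γ * (1 - Real.exp (γ*u) / (Real.exp (γ*u) + 1)) / Gf (γ*u)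
        - (1 - Real.exp u / (Real.exp u + 1)) / Gf u) u := by
    intro u hu
    have hu0 := mem_Ioi.mp hu
    have h1 : HasDerivAt (fun u => Gf (γ * u)) ((1 - Real.exp (γ*u) / (Real.exp (γ*u) + 1)) * γ) u := by
      have := (hasDerivAt_Gf (γ*u)).comp u (((hasDerivAt_id u).const_mul γ) : HasDerivAt (fun y => γ * y) (γ * 1) u)
      simpa [mul_comm, Function.comp_def] using this
    have h2 : HasDerivAt (fun u => Real.log (Gf (γ * u)))
        ((1 - Real.exp (γ*u) / (Real.exp (γ*u) + 1)) * γ / Gf (γ*u)) u :=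
      h1.log (Gf_pos (by positivity)).ne'
    have h3 : HasDerivAt (fun u => Real.log (Gf u))
        ((1 - Real.exp u / (Real.exp u + 1)) / Gf u) u :=
      (hasDerivAt_Gf u).log (Gf_pos hu0).ne'
    have := h2.sub h3
    refine this.congr_deriv ?_
    ring
  have hanti : StrictAntiOn Φ (Ioi 0) := by
    apply strictAntiOn_of_deriv_neg (convex_Ioi 0)
    · intro u hu
      exact (hderiv u hu).continuousAt.continuousWithinAt
    · intro u hu
      rw [interior_Ioi] at hu
      have hu0 := mem_Ioi.mp hu
      rw [(hderiv u hu).deriv]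
      -- rewrite 1 - e^x/(e^x+1) = 1/(e^x+1)
      have key : ∀ x : ℝ, 1 - Real.exp x / (Real.exp x + 1) = 1 / (Real.exp x + 1) := by
        intro x
        have : (0:ℝ) < Real.exp x + 1 := by positivity
        field_simp
        ring
      rw [key, key]
      have hMu := Mf_pos hu0
      have hMγ := Mf_pos (show 0 < γ * u by positivity)
      have hmono := Mdiv_mono (mem_Ioi.mpr hu0) (mem_Ioi.mpr (show 0 < γ*u by positivity))
        (by nlinarith : u < γ * u)
      simp only at hmono
      -- Mf u / u < Mf (γu) / (γu)  ⇒  γ * Mf u < Mf (γ u)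
      have h4 : γ * Mf u < Mf (γ * u) := by
        rw [div_lt_div_iff₀ hu0 (by positivity)] at hmono
        nlinarith
      have hG1 := Gf_pos hu0
      have hG2 := Gf_pos (show 0 < γ * u by positivity)
      have e1 : γ * (1 / (Real.exp (γ*u) + 1)) / Gf (γ*u) = γ / Mf (γ*u) := by
        unfold Mf; field_simp
      have e2 : (1 / (Real.exp u + 1)) / Gf u = 1 / Mf u := by
        unfold Mf; field_simp
      rw [e1, e2]
      rw [sub_neg, div_lt_div_iff₀ hMγ hMu]
      linarith
  have hΦab : Φ b < Φ a := hanti (mem_Ioi.mpr ha) (mem_Ioi.mpr (ha.trans hab)) hab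
  have hb0 : 0 < b := ha.trans hab
  have g1 := Gf_pos ha
  have g2 := Gf_pos hb0
  have g3 := Gf_pos (show 0 < γ * a by positivity)
  have g4 := Gf_pos (show 0 < γ * b by positivity)
  have : Real.log (Gf a * Gf (γ * b)) < Real.log (Gf (γ * a) * Gf b) := by
    rw [Real.log_mul g1.ne' g4.ne', Real.log_mul g3.ne' g2.ne']
    simp only [hΦ] at hΦab
    linarith
  exact (Real.log_lt_log_iff (by positivity) (by positivity)).mp this

lemma Gf_eq {x : ℝ} (hx : 0 < x) : Gf (-Real.log x) = Real.log (2 / (1 + x)) := by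
  have h1 : Real.exp (-Real.log x) = x⁻¹ := by rw [Real.exp_neg, Real.exp_log hx]
  have h1x : (0:ℝ) < 1 + x := by linarith
  rw [Gf, h1, Real.log_div two_ne_zero h1x.ne']
  have : x⁻¹ + 1 = (1 + x) / x := by field_simp
  rw [this, Real.log_div h1x.ne' hx.ne']
  ring

lemma Gf_eq_rpow {x γ : ℝ} (hx : 0 < x) (hγ : 0 < γ) :
    Gf (γ * -Real.log x) = Real.log (2 / (1 + x ^ γ)) := by
  have h1 : γ * -Real.log x = -Real.log (x ^ γ) := by
    rw [Real.log_rpow hx]; ring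
  rw [h1, Gf_eq (Real.rpow_pos_of_pos hx γ)]

lemma strict_ineq {α β γ : ℝ} (hβ : 0 ≤ β) (hβα : β < α) (hα : α < 1) (hγ : 1 < γ) :
    Real.log (2 / (1 + α)) / Real.log (2 / (1 + β)) <
      Real.log (2 / (1 + α ^ γ)) / Real.log (2 / (1 + β ^ γ)) := by
  have hα0 : 0 < α := lt_of_le_of_lt hβ hβα
  have hγ0 : 0 < γ := lt_trans one_pos hγ
  rcases eq_or_lt_of_le hβ with hb0 | hb0
  · -- β = 0
    rw [← hb0, Real.zero_rpow hγ0.ne']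
    have hlt : α ^ γ < α := by
      calc α ^ γ < α ^ (1:ℝ) := Real.rpow_lt_rpow_of_exponent_gt hα0 hα hγ
        _ = α := Real.rpow_one α
    have hpow0 : 0 < α ^ γ := Real.rpow_pos_of_pos hα0 γ
    have h1 : Real.log (2 / (1 + α)) < Real.log (2 / (1 + α ^ γ)) := by
      apply Real.log_lt_log (by positivity)
      apply div_lt_div_of_pos_left two_pos (by positivity) (by linarith)
    have hlog2 : (0:ℝ) < Real.log (2 / (1 + (0:ℝ))) := by
      norm_num
      exact Real.log_pos (by norm_num)
    exact div_lt_div_of_pos_right h1 hlog2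
  · -- β > 0
    set a := -Real.log α with ha
    set b := -Real.log β with hb
    have ha0 : 0 < a := by
      have : Real.log α < 0 := Real.log_neg hα0 hα
      simp only [ha]; linarith
    have hab : a < b := by
      have : Real.log β < Real.log α := Real.log_lt_log hb0 hβα
      simp only [ha, hb]; linarith
    have key := prod_lt ha0 hab hγ
    rw [Gf_eq hα0, Gf_eq hb0, Gf_eq_rpow hα0 hγ0, Gf_eq_rpow hb0 hγ0] at key
    have hβ1 : β < 1 := hβα.trans hα
    have hd1 : 0 < Real.log (2 / (1 + β)) := by
      apply Real.log_pos
      rw [lt_div_iff₀ (by linarith)]; linarith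
    have hd2 : 0 < Real.log (2 / (1 + β ^ γ)) := by
      have h5 : β ^ γ < 1 := Real.rpow_lt_one hβ hβ1 hγ0
      have h6 : (0:ℝ) < β ^ γ := Real.rpow_pos_of_pos hb0 γ
      apply Real.log_pos
      rw [lt_div_iff₀ (by linarith)]
      linarith
    rw [div_lt_div_iff₀ hd1 hd2]
    linarith

/-- for `0 ≤ β < α < 1` and `γ ≥ 1`,
`log(2/(1 + α^γ)) / log(2/(1 + β^γ)) ≥ log(2/(1+α)) / log(2/(1+β))`, with equality
if and only if `γ = 1`. -/
theorem rho_gamma_ge (α β γ : ℝ) (hβ : 0 ≤ β) (hβα : β < α) (hα : α < 1) (hγ : 1 ≤ γ) :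
    Real.log (2 / (1 + α ^ γ)) / Real.log (2 / (1 + β ^ γ)) ≥
      Real.log (2 / (1 + α)) / Real.log (2 / (1 + β)) ∧
    (Real.log (2 / (1 + α ^ γ)) / Real.log (2 / (1 + β ^ γ)) =
      Real.log (2 / (1 + α)) / Real.log (2 / (1 + β)) ↔ γ = 1) := by
  rcases eq_or_lt_of_le hγ with h1 | h1
  · rw [← h1]
    simp [Real.rpow_one]
  · have hs := strict_ineq hβ hβα hα h1
    refine ⟨le_of_lt hs, ?_, ?_⟩
    · intro h
      exact absurd h hs.ne'
    · intro h
      rw [h] at h1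
      exact absurd h1 (lt_irrefl 1)
end
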